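/- arXiv:2103.12267 — 10 statements merged into one kernel-verified Lean document; each statement's English description precedes it below -/
import Mathlib

section
/- Let K be a complex Hilbert space with fundamental symmetry J, [h,k] := ⟨h, J k⟩, let {η_x^1,…,η_x^n}_{x∈M} be a continuous frame of rank n for (K,[·,·]) with frame bounds 0 < a ≤ b, and let S be its frame operator. Then S is bijective with bounded inverse S⁻¹, and the self-adjoint operators S⁻¹∘J and J∘S⁻¹ on the Hilbert space K satisfy b⁻¹·id ≤ S⁻¹∘J ≤ a⁻¹·id and b⁻¹·id ≤ J∘S⁻¹ ≤ a⁻¹·id in the order of self-adjoint operators. -/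
open MeasureTheory
open scoped InnerProductSpace

/-- Cauchy–Schwarz inequality for the positive sesquilinear form `(x, y) ↦ ⟪x, T y⟫` attached
to a positive symmetric operator `T`. -/
lemma frame_cs_aux {K : Type*} [NormedAddCommGroup K] [InnerProductSpace ℂ K]
    (T : K →L[ℂ] K) (hsymm : ∀ x y : K, ⟪T x, y⟫_ℂ = ⟪x, T y⟫_ℂ)
    (hpos : ∀ x : K, 0 ≤ RCLike.re ⟪x, T x⟫_ℂ) (x y : K) :
    ‖⟪x, T y⟫_ℂ‖ ^ 2 ≤ RCLike.re ⟪x, T x⟫_ℂ * RCLike.re ⟪y, T y⟫_ℂ := by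
  let c : PreInnerProductSpace.Core ℂ K :=
    { inner := fun u v => ⟪u, T v⟫_ℂ
      conj_inner_symm := fun u v => by
        simp only [inner_conj_symm]; exact hsymm u v
      re_inner_nonneg := hpos
      add_left := fun u v w => inner_add_left _ _ _
      smul_left := fun u v r => inner_smul_left _ _ _ }
  have h : ‖⟪x, T y⟫_ℂ‖ * ‖⟪y, T x⟫_ℂ‖ ≤ RCLike.re ⟪x, T x⟫_ℂ * RCLike.re ⟪y, T y⟫_ℂ :=
    @InnerProductSpace.Core.inner_mul_inner_self_le ℂ K _ _ _ c x y
  have heq : ‖⟪y, T x⟫_ℂ‖ = ‖⟪x, T y⟫_ℂ‖ := by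
    rw [← hsymm x y, norm_inner_symm]
  rw [heq] at h
  simpa [sq] using h

/-- If `⟪x, A x⟫` is a nonnegative real number for all `x`, then `A` is a positive operator. -/
lemma frame_pos_aux {K : Type*} [NormedAddCommGroup K] [InnerProductSpace ℂ K]
    [CompleteSpace K] (A : K →L[ℂ] K) (g : K → ℝ)
    (h : ∀ x, ⟪x, A x⟫_ℂ = (g x : ℂ)) (hg : ∀ x, 0 ≤ g x) : A.IsPositive := by
  rw [ContinuousLinearMap.isPositive_iff_complex]
  intro x
  have hAx : ⟪A x, x⟫_ℂ = (g x : ℂ) := by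
    rw [← inner_conj_symm, h x, Complex.conj_ofReal]
  rw [hAx]
  refine ⟨by simp, by simpa using hg x⟩

/-- The frame operator `S` of a continuous frame of rank `n` for a Krein
space `(K, [·,·])`, `[h,k] = ⟪h, J k⟫_ℂ`, with frame bounds `0 < a ≤ b`, is bijective with
bounded inverse `S⁻¹`, and the self-adjoint operators `S⁻¹∘J` and `J∘S⁻¹` satisfy
`b⁻¹·1 ≤ S⁻¹∘J ≤ a⁻¹·1` and `b⁻¹·1 ≤ J∘S⁻¹ ≤ a⁻¹·1`. -/
theorem frameOperator_invertible
    {K : Type*} [NormedAddCommGroup K] [InnerProductSpace ℂ K] [CompleteSpace K]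
    (J : K →L[ℂ] K) (hJsa : IsSelfAdjoint J) (hJ2 : ∀ k : K, J (J k) = k)
    {M : Type*} [MeasurableSpace M] (μ : Measure M)
    (n : ℕ) (η : Fin n → M → K)
    (hmeas : ∀ (i : Fin n) (k : K), Measurable fun x : M => ⟪η i x, k⟫_ℂ)
    (a b : ℝ) (ha : 0 < a) (hab : a ≤ b)
    (hframe : ∀ k : K,
      a * ‖k‖ ^ 2 ≤ ∑ i : Fin n, ∫ x, ‖⟪η i x, J k⟫_ℂ‖ ^ 2 ∂μ ∧
      ∑ i : Fin n, ∫ x, ‖⟪η i x, J k⟫_ℂ‖ ^ 2 ∂μ ≤ b * ‖k‖ ^ 2)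
    (S : K →L[ℂ] K)
    (hS : ∀ k₁ k₂ : K,
      ⟪k₁, J (S k₂)⟫_ℂ = ∑ i : Fin n, ∫ x, ⟪k₁, J (η i x)⟫_ℂ * ⟪η i x, J k₂⟫_ℂ ∂μ) :
    Function.Bijective S ∧
    ∃ Sinv : K →L[ℂ] K, S ∘L Sinv = 1 ∧ Sinv ∘L S = 1 ∧
      IsSelfAdjoint (Sinv ∘L J) ∧ IsSelfAdjoint (J ∘L Sinv) ∧
      (Sinv ∘L J - (b⁻¹ : ℂ) • (1 : K →L[ℂ] K)).IsPositive ∧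
      ((a⁻¹ : ℂ) • (1 : K →L[ℂ] K) - Sinv ∘L J).IsPositive ∧
      (J ∘L Sinv - (b⁻¹ : ℂ) • (1 : K →L[ℂ] K)).IsPositive ∧
      ((a⁻¹ : ℂ) • (1 : K →L[ℂ] K) - J ∘L Sinv).IsPositive := by
  have hb : 0 < b := lt_of_lt_of_le ha hab
  set T : K →L[ℂ] K := J ∘L S with hTdef
  set F : K → ℝ := fun k => ∑ i : Fin n, ∫ x, ‖⟪η i x, J k⟫_ℂ‖ ^ 2 ∂μ with hFdef
  -- J is symmetric
  have hJsym : ∀ x y : K, ⟪J x, y⟫_ℂ = ⟪x, J y⟫_ℂ := fun x y => hJsa.isSymmetric x y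
  have hJnorm : ∀ x : K, ‖J x‖ = ‖x‖ := by
    intro x
    have h2' : ‖J x‖ ^ 2 = ‖x‖ ^ 2 := by
      rw [← inner_self_eq_norm_sq (𝕜 := ℂ), ← inner_self_eq_norm_sq (𝕜 := ℂ) x,
        hJsym, hJ2]
    nlinarith [norm_nonneg (J x), norm_nonneg x]
  -- the key identity ⟪k, T k⟫ = F k
  have key : ∀ k : K, ⟪k, T k⟫_ℂ = ((F k : ℝ) : ℂ) := by
    intro k
    have h1 : ⟪k, T k⟫_ℂ = ∑ i : Fin n, ∫ x, ⟪k, J (η i x)⟫_ℂ * ⟪η i x, J k⟫_ℂ ∂μ := hS k k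
    have h2 : ∀ (i : Fin n) (x : M),
        ⟪k, J (η i x)⟫_ℂ * ⟪η i x, J k⟫_ℂ = ((‖⟪η i x, J k⟫_ℂ‖ ^ 2 : ℝ) : ℂ) := by
      intro i x
      have hc : ⟪k, J (η i x)⟫_ℂ = (starRingEnd ℂ) ⟪η i x, J k⟫_ℂ := by
        rw [← inner_conj_symm]
        congr 1
        rw [hJsym]
      rw [hc, RCLike.conj_mul]
      norm_cast
    have h3 : ∀ i : Fin n, ∫ x, ((‖⟪η i x, J k⟫_ℂ‖ ^ 2 : ℝ) : ℂ) ∂μ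
        = ((∫ x, ‖⟪η i x, J k⟫_ℂ‖ ^ 2 ∂μ : ℝ) : ℂ) := fun i => integral_ofReal
    rw [h1]
    simp only [h2, h3]
    rw [hFdef]
    push_cast
    rfl
  have hre : ∀ k : K, RCLike.re ⟪k, T k⟫_ℂ = F k := by
    intro k; rw [key]; simp
  have hFnonneg : ∀ k : K, 0 ≤ F k := fun k => by
    have := (hframe k).1; nlinarith [sq_nonneg ‖k‖]
  -- T is positive and symmetric
  have hTpos : T.IsPositive := frame_pos_aux T F key hFnonneg
  have hTsymm : ∀ x y : K, ⟪T x, y⟫_ℂ = ⟪x, T y⟫_ℂ := fun x y =>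
    (ContinuousLinearMap.isSelfAdjoint_iff_isSymmetric.mp hTpos.isSelfAdjoint) x y
  -- T is a unit
  have hTunit : IsUnit T := by
    refine ContinuousLinearMap.isUnit_of_forall_le_norm_inner_map T
      (c := ⟨a, ha.le⟩) (by exact_mod_cast ha) fun x => ?_
    have h1 : ‖⟪T x, x⟫_ℂ‖ = ‖⟪x, T x⟫_ℂ‖ := norm_inner_symm _ _
    have h2 : ‖⟪x, T x⟫_ℂ‖ = |F x| := by rw [key]; simp [Complex.norm_real]
    have h3 : |F x| = F x := abs_of_nonneg (hFnonneg x)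
    have h4 := (hframe x).1
    rw [h1, h2, h3]
    calc ‖x‖ ^ 2 * (⟨a, ha.le⟩ : NNReal) = a * ‖x‖ ^ 2 := by push_cast; ring
    _ ≤ F x := h4
  obtain ⟨Tinv, hTT, hTT'⟩ := isUnit_iff_exists.mp hTunit
  have hTTapp : ∀ x : K, T (Tinv x) = x := fun x => by
    have := congrArg (fun f : K →L[ℂ] K => f x) hTT
    simpa using this
  have hTTapp' : ∀ x : K, Tinv (T x) = x := fun x => by
    have := congrArg (fun f : K →L[ℂ] K => f x) hTT'
    simpa using this
  -- relation S x = J (T x)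
  have hSJT : ∀ x : K, S x = J (T x) := fun x => by
    simp only [hTdef, ContinuousLinearMap.comp_apply, hJ2]
  -- lower bound on ‖T x‖
  have hTlow : ∀ x : K, a * ‖x‖ ≤ ‖T x‖ := by
    intro x
    rcases eq_or_ne x 0 with rfl | hx
    · simp
    have h1 : a * ‖x‖ ^ 2 ≤ F x := (hframe x).1
    have h2 : F x ≤ ‖x‖ * ‖T x‖ := by
      rw [← hre x]
      exact (RCLike.re_le_norm _).trans (norm_inner_le_norm _ _)
    have hxpos : 0 < ‖x‖ := norm_pos_iff.mpr hx
    nlinarith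
  -- the two scalar inequalities for Tinv
  have hub : ∀ x : K, F (Tinv x) ≤ a⁻¹ * ‖x‖ ^ 2 := by
    intro x
    set u := Tinv x with hu
    have hx : T u = x := hTTapp x
    have h1 : F u ≤ ‖u‖ * ‖T u‖ := by
      rw [← hre u]
      exact (RCLike.re_le_norm _).trans (norm_inner_le_norm _ _)
    have h2 : a * ‖u‖ ≤ ‖T u‖ := hTlow u
    have h5 : F u ≤ a⁻¹ * ‖T u‖ ^ 2 := by
      rw [le_inv_mul_iff₀ ha]
      nlinarith [norm_nonneg (T u), norm_nonneg u]
    rwa [hx] at h5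
  have hlb : ∀ x : K, b⁻¹ * ‖x‖ ^ 2 ≤ F (Tinv x) := by
    intro x
    set u := Tinv x with hu
    have hx : T u = x := hTTapp x
    have hcs := frame_cs_aux T hTsymm (fun y => by rw [hre]; exact hFnonneg y) u (T u)
    rw [hre, hre] at hcs
    have hinner : ⟪u, T (T u)⟫_ℂ = ((‖T u‖ ^ 2 : ℝ) : ℂ) := by
      rw [← hTsymm, inner_self_eq_norm_sq_to_K]
      norm_cast
    have hnorm4 : ‖⟪u, T (T u)⟫_ℂ‖ ^ 2 = ‖T u‖ ^ 4 := by
      rw [hinner, Complex.norm_real, Real.norm_of_nonneg (by positivity)]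
      ring
    have hFTu : F (T u) ≤ b * ‖T u‖ ^ 2 := (hframe (T u)).2
    have h4 : ‖T u‖ ^ 4 ≤ F u * (b * ‖T u‖ ^ 2) := by
      rw [← hnorm4]
      exact hcs.trans (mul_le_mul_of_nonneg_left hFTu (hFnonneg u))
    rcases eq_or_ne (T u) 0 with h0 | h0
    · rw [hx] at h0
      rw [h0]
      simpa using hFnonneg u
    · have hpos : 0 < ‖T u‖ := norm_pos_iff.mpr h0
      rw [← hx, inv_mul_le_iff₀ hb]
      have h5 : ‖T u‖ ^ 2 * ‖T u‖ ^ 2 ≤ (b * F u) * ‖T u‖ ^ 2 := by nlinarith [h4]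
      exact le_of_mul_le_mul_right h5 (by positivity)
  -- inner products with Tinv
  have hTinv_inner : ∀ x : K, ⟪x, Tinv x⟫_ℂ = ((F (Tinv x) : ℝ) : ℂ) := by
    intro x
    have h0 : ⟪x, Tinv x⟫_ℂ = ⟪T (Tinv x), Tinv x⟫_ℂ := by rw [hTTapp x]
    rw [h0, hTsymm, key]
  -- bijectivity of S
  have hSbij : Function.Bijective S := by
    constructor
    · intro x y hxy
      rw [hSJT, hSJT] at hxy
      have h2 : T x = T y := by
        have := congrArg J hxy
        rwa [hJ2, hJ2] at this
      calc x = Tinv (T x) := (hTTapp' x).symm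
      _ = Tinv (T y) := by rw [h2]
      _ = y := hTTapp' y
    · intro y
      refine ⟨Tinv (J y), ?_⟩
      rw [hSJT, hTTapp, hJ2]
  -- the inverse of S
  set Sinv : K →L[ℂ] K := Tinv ∘L J with hSinvdef
  have hSinvJ : Sinv ∘L J = Tinv := by
    ext x
    simp only [hSinvdef, ContinuousLinearMap.comp_apply, hJ2]
  have hJSinv : ∀ x : K, (J ∘L Sinv) x = J (Tinv (J x)) := fun x => by
    simp [hSinvdef]
  -- inner products with J ∘L Sinv
  have hJSinv_inner : ∀ x : K, ⟪x, (J ∘L Sinv) x⟫_ℂ = ((F (Tinv (J x)) : ℝ) : ℂ) := by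
    intro x
    rw [hJSinv, ← hJsym]
    exact hTinv_inner (J x)
  -- inner product with a real scalar multiple of the identity
  have hone : ∀ (c : ℂ) (x : K),
      ⟪x, (c • (1 : K →L[ℂ] K)) x⟫_ℂ = c * ((‖x‖ ^ 2 : ℝ) : ℂ) := by
    intro c x
    simp only [ContinuousLinearMap.smul_apply, ContinuousLinearMap.one_apply, inner_smul_right]
    congr 1
    rw [inner_self_eq_norm_sq_to_K]
    norm_cast
  -- positivity statements
  have hp1 : (Sinv ∘L J - (b⁻¹ : ℂ) • (1 : K →L[ℂ] K)).IsPositive := by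
    refine frame_pos_aux _ (fun x => F (Tinv x) - b⁻¹ * ‖x‖ ^ 2) (fun x => ?_) (fun x => by
      have := hlb x; linarith)
    rw [ContinuousLinearMap.sub_apply, inner_sub_right, hSinvJ, hTinv_inner, hone]
    push_cast
    ring
  have hp2 : ((a⁻¹ : ℂ) • (1 : K →L[ℂ] K) - Sinv ∘L J).IsPositive := by
    refine frame_pos_aux _ (fun x => a⁻¹ * ‖x‖ ^ 2 - F (Tinv x)) (fun x => ?_) (fun x => by
      have := hub x; linarith)
    rw [ContinuousLinearMap.sub_apply, inner_sub_right, hSinvJ, hTinv_inner, hone]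
    push_cast
    ring
  have hp3 : (J ∘L Sinv - (b⁻¹ : ℂ) • (1 : K →L[ℂ] K)).IsPositive := by
    refine frame_pos_aux _ (fun x => F (Tinv (J x)) - b⁻¹ * ‖x‖ ^ 2) (fun x => ?_) (fun x => by
      have := hlb (J x); rw [hJnorm] at this; linarith)
    rw [ContinuousLinearMap.sub_apply, inner_sub_right, hJSinv_inner, hone]
    push_cast
    ring
  have hp4 : ((a⁻¹ : ℂ) • (1 : K →L[ℂ] K) - J ∘L Sinv).IsPositive := by
    refine frame_pos_aux _ (fun x => a⁻¹ * ‖x‖ ^ 2 - F (Tinv (J x))) (fun x => ?_) (fun x => by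
      have := hub (J x); rw [hJnorm] at this; linarith)
    rw [ContinuousLinearMap.sub_apply, inner_sub_right, hJSinv_inner, hone]
    push_cast
    ring
  -- self-adjointness
  have hsa1 : IsSelfAdjoint (Sinv ∘L J) := by
    rw [hSinvJ]
    exact (frame_pos_aux Tinv (fun x => F (Tinv x)) hTinv_inner
      (fun x => hFnonneg _)).isSelfAdjoint
  have hsa2 : IsSelfAdjoint (J ∘L Sinv) :=
    (frame_pos_aux _ (fun x => F (Tinv (J x))) hJSinv_inner (fun x => hFnonneg _)).isSelfAdjoint
  refine ⟨hSbij, Sinv, ?_, ?_, hsa1, hsa2, hp1, hp2, hp3, hp4⟩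
  · ext x
    simp only [ContinuousLinearMap.comp_apply, hSinvdef, ContinuousLinearMap.one_apply]
    rw [hSJT, hTTapp, hJ2]
  · ext x
    simp only [ContinuousLinearMap.comp_apply, hSinvdef, ContinuousLinearMap.one_apply]
    rw [hSJT, hJ2, hTTapp']
end

section
/- (Frame decomposition) Let K be a complex Hilbert space with fundamental symmetry J, [h,k] := ⟨h, J k⟩, let {η_x^1,…,η_x^n}_{x∈M} be a continuous frame of rank n for (K,[·,·]) with respect to a measure space (M,𝔅,μ), and let S be its frame operator (which is bijective with bounded inverse). Then for all h, k ∈ K: [h, k] = ∑_{i=1}^n ∫_M [η_x^i, k] · [h, S⁻¹ η_x^i] dμ(x) and [h, k] = ∑_{i=1}^n ∫_M [S⁻¹ η_x^i, k] · [h, η_x^i] dμ(x); equivalently, the identity operator equals the weak integrals ∑_i ∫_M |η_x^i][S⁻¹η_x^i| dμ and ∑_i ∫_M |S⁻¹η_x^i][η_x^i| dμ. -/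
open MeasureTheory
open scoped InnerProductSpace

/-- **Frame decomposition.** If `S` is the frame operator of a continuous
frame of rank `n` for the Krein space `(K, [·,·])`, `[h,k] = ⟪h, J k⟫_ℂ`, and `S⁻¹` is its
bounded inverse, then for all `h, k ∈ K` one has
`[h,k] = ∑_i ∫ [η_x^i, k]·[h, S⁻¹η_x^i] dμ = ∑_i ∫ [S⁻¹η_x^i, k]·[h, η_x^i] dμ`,
i.e. the identity is the weak integral `∑_i ∫ |η_x^i][S⁻¹η_x^i| dμ = ∑_i ∫ |S⁻¹η_x^i][η_x^i| dμ`. -/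
theorem frame_decomposition
    {K : Type*} [NormedAddCommGroup K] [InnerProductSpace ℂ K] [CompleteSpace K]
    (J : K →L[ℂ] K) (hJsa : IsSelfAdjoint J) (hJ2 : ∀ k : K, J (J k) = k)
    {M : Type*} [MeasurableSpace M] (μ : Measure M)
    (n : ℕ) (η : Fin n → M → K)
    (hmeas : ∀ (i : Fin n) (k : K), Measurable fun x : M => ⟪η i x, k⟫_ℂ)
    (a b : ℝ) (ha : 0 < a) (hab : a ≤ b)
    (hframe : ∀ k : K,
      a * ‖k‖ ^ 2 ≤ ∑ i : Fin n, ∫ x, ‖⟪η i x, J k⟫_ℂ‖ ^ 2 ∂μ ∧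
      ∑ i : Fin n, ∫ x, ‖⟪η i x, J k⟫_ℂ‖ ^ 2 ∂μ ≤ b * ‖k‖ ^ 2)
    (S : K →L[ℂ] K)
    (hS : ∀ k₁ k₂ : K,
      ⟪k₁, J (S k₂)⟫_ℂ = ∑ i : Fin n, ∫ x, ⟪k₁, J (η i x)⟫_ℂ * ⟪η i x, J k₂⟫_ℂ ∂μ)
    (Sinv : K →L[ℂ] K) (hSinv₁ : S ∘L Sinv = 1) (hSinv₂ : Sinv ∘L S = 1) :
    ∀ h k : K,
      ⟪h, J k⟫_ℂ = ∑ i : Fin n, ∫ x, ⟪η i x, J k⟫_ℂ * ⟪h, J (Sinv (η i x))⟫_ℂ ∂μ ∧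
      ⟪h, J k⟫_ℂ = ∑ i : Fin n, ∫ x, ⟪Sinv (η i x), J k⟫_ℂ * ⟪h, J (η i x)⟫_ℂ ∂μ := fun h k => by
  have hJ : ∀ x y : K, ⟪J x, y⟫_ℂ = ⟪x, J y⟫_ℂ := by
    intro x y
    rw [← ContinuousLinearMap.adjoint_inner_left, hJsa.adjoint_eq]
  have hSS : ∀ y : K, S (Sinv y) = y := by
    intro y
    have := DFunLike.congr_fun hSinv₁ y
    simpa using this
  have key : ∀ x y : K, ⟪S x, J y⟫_ℂ = ⟪x, J (S y)⟫_ℂ := by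
    intro x y
    have h1 : ⟪S x, J y⟫_ℂ = starRingEnd ℂ ⟪y, J (S x)⟫_ℂ := by
      rw [← inner_conj_symm, hJ]
    rw [h1, hS y x, hS x y, map_sum]
    refine Finset.sum_congr rfl (fun i _ => ?_)
    rw [← integral_conj]
    refine integral_congr_ae (Filter.Eventually.of_forall (fun x' => ?_))
    simp only [map_mul, inner_conj_symm]
    rw [hJ, hJ, mul_comm]
  have hSinvSym : ∀ x y : K, ⟪x, J (Sinv y)⟫_ℂ = ⟪Sinv x, J y⟫_ℂ := by
    intro x y
    calc ⟪x, J (Sinv y)⟫_ℂ = ⟪S (Sinv x), J (Sinv y)⟫_ℂ := by rw [hSS]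
      _ = ⟪Sinv x, J (S (Sinv y))⟫_ℂ := key _ _
      _ = ⟪Sinv x, J y⟫_ℂ := by rw [hSS]
  constructor
  · have e1 : ∀ (i : Fin n) (x' : M),
        ⟪η i x', J k⟫_ℂ * ⟪h, J (Sinv (η i x'))⟫_ℂ
          = ⟪Sinv h, J (η i x')⟫_ℂ * ⟪η i x', J k⟫_ℂ := by
      intro i x'; rw [hSinvSym, mul_comm]
    simp_rw [e1]
    rw [← hS (Sinv h) k, ← key, hSS]
  · have e2 : ∀ (i : Fin n) (x' : M),
        ⟪Sinv (η i x'), J k⟫_ℂ * ⟪h, J (η i x')⟫_ℂ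
          = ⟪h, J (η i x')⟫_ℂ * ⟪η i x', J (Sinv k)⟫_ℂ := by
      intro i x'; rw [← hSinvSym, mul_comm]
    simp_rw [e2]
    rw [← hS h (Sinv k), hSS]
end

section
/- Let K be a complex Hilbert space with fundamental symmetry J, [h,k] := ⟨h, J k⟩, let (M,𝔅,μ) be a measure space, and let η^i : M → K, i=1,…,n, be weakly measurable maps such that the function x ↦ [η_x^i, k] belongs to L²(M,μ) for every k ∈ K and every i, and such that the analysis operator T : K → ⊕_{i=1}^n L²(M,μ), (T k)_i(x) = [η_x^i, k], is a bounded linear operator. Then {η_x^1,…,η_x^n}_{x∈M} is a continuous frame of rank n for (K,[·,·]) (i.e. there exist 0 < a ≤ b with a‖k‖² ≤ ∑_{i=1}^n ∫_M |[η_x^i,k]|² dμ(x) ≤ b‖k‖² for all k) if and only if the Hilbert-space adjoint T* : ⊕_{i=1}^n L²(M,μ) → K of T is surjective. -/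
open MeasureTheory
open scoped InnerProductSpace ENNReal

lemma L2_norm_sq_eq_integral {M : Type*} [MeasurableSpace M] {μ : Measure M}
    (f : Lp ℂ 2 μ) : ‖f‖ ^ 2 = ∫ x, ‖(f : M → ℂ) x‖ ^ 2 ∂μ := by
  rw [← inner_self_eq_norm_sq (𝕜 := ℂ) f, L2.inner_def]
  simp_rw [inner_self_eq_norm_sq_to_K (𝕜 := ℂ)]
  simp_rw [← RCLike.ofReal_pow]
  rw [integral_ofReal]
  simp

lemma adjoint_surjective_iff' {E F : Type*} [NormedAddCommGroup E] [InnerProductSpace ℂ E]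
    [CompleteSpace E] [NormedAddCommGroup F] [InnerProductSpace ℂ F] [CompleteSpace F]
    (T : E →L[ℂ] F) :
    (∃ a : ℝ, 0 < a ∧ ∀ k : E, a * ‖k‖ ^ 2 ≤ ‖T k‖ ^ 2) ↔
      Function.Surjective (ContinuousLinearMap.adjoint T) := by
  constructor
  · rintro ⟨a, ha, hc⟩
    set S : E →L[ℂ] E := (ContinuousLinearMap.adjoint T).comp T with hSdef
    have hre : ∀ k : E, RCLike.re (⟪S k, k⟫_ℂ) = ‖T k‖ ^ 2 := by
      intro k
      have : ⟪S k, k⟫_ℂ = ⟪T k, T k⟫_ℂ := ContinuousLinearMap.adjoint_inner_left T k (T k)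
      rw [this, inner_self_eq_norm_sq]
    have hbound : ∀ k : E, ‖k‖ ≤ a⁻¹ * ‖S k‖ := by
      intro k
      rcases eq_or_ne k 0 with rfl | hk
      · simp
      have hk' : 0 < ‖k‖ := norm_pos_iff.2 hk
      have h1 : a * ‖k‖ ^ 2 ≤ RCLike.re (⟪S k, k⟫_ℂ) := by rw [hre]; exact hc k
      have h2 : RCLike.re (⟪S k, k⟫_ℂ) ≤ ‖S k‖ * ‖k‖ := re_inner_le_norm _ _
      have : a * ‖k‖ ≤ ‖S k‖ := by
        have := h1.trans h2
        nlinarith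
      have h3 := mul_le_mul_of_nonneg_left this (le_of_lt (inv_pos.2 ha))
      rwa [← mul_assoc, inv_mul_cancel₀ ha.ne', one_mul] at h3
    have hanti : AntilipschitzWith (Real.toNNReal a⁻¹) S := by
      apply S.antilipschitz_of_bound
      intro x
      have := hbound x
      rwa [Real.coe_toNNReal _ (by positivity)]
    have hclosed : IsClosed (Set.range S) :=
      hanti.isClosed_range S.uniformContinuous
    set R : Submodule ℂ E := LinearMap.range (S : E →ₗ[ℂ] E) with hR
    have hRclosed : IsClosed (R : Set E) := by
      have : (R : Set E) = Set.range S := by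
        ext x; simp [hR, LinearMap.mem_range]
      rw [this]; exact hclosed
    haveI : CompleteSpace R := hRclosed.completeSpace_coe
    have hRtop : R = ⊤ := by
      rw [← Submodule.orthogonal_eq_bot_iff]
      rw [Submodule.eq_bot_iff]
      intro v hv
      have h0 : ⟪S v, v⟫_ℂ = 0 := (Submodule.mem_orthogonal R v).1 hv (S v) ⟨v, rfl⟩
      have h1 : a * ‖v‖ ^ 2 ≤ 0 := by
        have := hc v; rw [← hre v, h0] at this; simpa using this
      have : ‖v‖ ^ 2 ≤ 0 := by nlinarith
      have : ‖v‖ = 0 := by nlinarith [sq_nonneg ‖v‖, norm_nonneg v]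
      simpa using this
    intro y
    have : y ∈ R := hRtop ▸ Submodule.mem_top
    obtain ⟨x, hx⟩ := this
    exact ⟨T x, hx⟩
  · intro hsurj
    obtain ⟨C, Cpos, hC⟩ := (ContinuousLinearMap.adjoint T).exists_preimage_norm_le hsurj
    refine ⟨(C ^ 2)⁻¹, by positivity, fun k => ?_⟩
    obtain ⟨u, hu, hun⟩ := hC k
    have h1 : ‖k‖ ^ 2 = RCLike.re (⟪u, T k⟫_ℂ) := by
      rw [← ContinuousLinearMap.adjoint_inner_left T, hu, inner_self_eq_norm_sq]
    have h2 : RCLike.re (⟪u, T k⟫_ℂ) ≤ ‖u‖ * ‖T k‖ := re_inner_le_norm _ _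
    have h3 : ‖k‖ ^ 2 ≤ C * ‖k‖ * ‖T k‖ := by
      calc ‖k‖ ^ 2 = RCLike.re (⟪u, T k⟫_ℂ) := h1
        _ ≤ ‖u‖ * ‖T k‖ := h2
        _ ≤ C * ‖k‖ * ‖T k‖ := by
            apply mul_le_mul_of_nonneg_right hun (norm_nonneg _)
    rcases eq_or_ne k 0 with rfl | hk
    · simp
    have hk' : 0 < ‖k‖ := norm_pos_iff.2 hk
    have h4 : ‖k‖ ≤ C * ‖T k‖ := by nlinarith
    have h5 : ‖k‖ ^ 2 ≤ C ^ 2 * ‖T k‖ ^ 2 := by nlinarith [norm_nonneg (T k)]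
    rw [inv_mul_le_iff₀ (by positivity)]
    linarith [h5]

open MeasureTheory
open scoped InnerProductSpace ENNReal

/-- The finite Hilbert direct sum `PiLp 2` of complete spaces is complete. -/
noncomputable instance piLp_completeSpace {ι : Type*} (p : ℝ≥0∞) (E : ι → Type*)
    [∀ i, UniformSpace (E i)] [∀ i, CompleteSpace (E i)] : CompleteSpace (PiLp p E) :=
  (PiLp.uniformEquiv p E).completeSpace_iff.2 (Pi.complete E)

/-- A weakly measurable family whose analysis transform lands in
`⊕_{i=1}^n L²(M,μ)` and whose analysis operator `T` is bounded is a continuous frame of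
rank `n` for the Krein space `(K, [·,·])`, `[h,k] = ⟪h, J k⟫_ℂ`, if and only if the
Hilbert space adjoint `T*` (the pre-frame operator) is surjective. -/
theorem continuousFrame_iff_preFrame_surjective
    {K : Type*} [NormedAddCommGroup K] [InnerProductSpace ℂ K] [CompleteSpace K]
    (J : K →L[ℂ] K) (hJsa : IsSelfAdjoint J) (hJ2 : ∀ k : K, J (J k) = k)
    {M : Type*} [MeasurableSpace M] (μ : Measure M)
    (n : ℕ) (η : Fin n → M → K)
    (hmeas : ∀ (i : Fin n) (k : K), Measurable fun x : M => ⟪η i x, k⟫_ℂ)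
    (hL2 : ∀ (i : Fin n) (k : K), MemLp (fun x : M => ⟪η i x, J k⟫_ℂ) 2 μ)
    (T : K →L[ℂ] PiLp 2 fun _ : Fin n => Lp ℂ 2 μ)
    (hT : ∀ (k : K) (i : Fin n), (T k i : M → ℂ) =ᵐ[μ] fun x : M => ⟪η i x, J k⟫_ℂ) :
    (∃ a b : ℝ, 0 < a ∧ a ≤ b ∧ ∀ k : K,
        a * ‖k‖ ^ 2 ≤ ∑ i : Fin n, ∫ x, ‖⟪η i x, J k⟫_ℂ‖ ^ 2 ∂μ ∧
        ∑ i : Fin n, ∫ x, ‖⟪η i x, J k⟫_ℂ‖ ^ 2 ∂μ ≤ b * ‖k‖ ^ 2) ↔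
      Function.Surjective (ContinuousLinearMap.adjoint T) := by
  have key : ∀ k : K, ∑ i : Fin n, ∫ x, ‖⟪η i x, J k⟫_ℂ‖ ^ 2 ∂μ = ‖T k‖ ^ 2 := by
    intro k
    rw [PiLp.norm_sq_eq_of_L2]
    refine Finset.sum_congr rfl fun i _ => ?_
    rw [L2_norm_sq_eq_integral (T k i)]
    refine integral_congr_ae ((hT k i).mono fun x hx => ?_)
    simp only [hx]
  constructor
  · rintro ⟨a, b, ha, hab, hfr⟩
    exact (adjoint_surjective_iff' T).1 ⟨a, ha, fun k => by rw [← key k]; exact (hfr k).1⟩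
  · intro hsurj
    obtain ⟨a, ha, hc⟩ := (adjoint_surjective_iff' T).2 hsurj
    refine ⟨min a 1, max (‖T‖ ^ 2) 1, lt_min ha one_pos,
      le_trans (min_le_right _ _) (le_max_right _ _), fun k => ?_⟩
    rw [key k]
    constructor
    · calc min a 1 * ‖k‖ ^ 2 ≤ a * ‖k‖ ^ 2 := by gcongr; exact min_le_left _ _
        _ ≤ ‖T k‖ ^ 2 := hc k
    · calc ‖T k‖ ^ 2 ≤ (‖T‖ * ‖k‖) ^ 2 := by
            gcongr
            exact T.le_opNorm k
        _ = ‖T‖ ^ 2 * ‖k‖ ^ 2 := by ring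
        _ ≤ max (‖T‖ ^ 2) 1 * ‖k‖ ^ 2 := by gcongr; exact le_max_left _ _
end

section
/- Let K be a complex Hilbert space with fundamental symmetry J, [h,k] := ⟨h, J k⟩, let (M₀,𝔅₀,μ₀) be a finite positive measure space, and let {η_x^1,…,η_x^n}_{x∈M₀} be a continuous frame of rank n for (K,[·,·]) with respect to μ₀ with frame bounds 0 < a ≤ b. On M := M₀ × {-1, +1} equip the product σ-algebra with the product measure μ of μ₀ and the counting measure on {-1,+1}, and set η_{(x,p)}^i := η_x^i. Then: (1) {η_{(x,p)}^1,…,η_{(x,p)}^n}_{(x,p)∈M} is a continuous frame of rank n for (K,[·,·]) with respect to (M, μ) with frame bounds 2a ≤ 2b; (2) for all h, k ∈ K: ∑_{i=1}^n ∫_M p · [η_{(x,p)}^i, k] · [h, η_{(x,p)}^i] dμ((x,p)) = 0; in particular the operator 𝒮 = T* T (the pre-frame operator composed with the analysis operator, defined with respect to the signed measure with sign p) is the zero operator and is not invertible. -/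
open MeasureTheory
open scoped InnerProductSpace

lemma count_bool_eq : (Measure.count : Measure Bool)
    = Measure.dirac false + Measure.dirac true := by
  ext s hs
  rw [Measure.count, Measure.sum_apply _ hs, tsum_bool, Measure.add_apply]

lemma prod_count_bool {M₀ : Type*} [MeasurableSpace M₀] (μ₀ : Measure M₀) [SFinite μ₀] :
    μ₀.prod (Measure.count : Measure Bool)
      = Measure.map (fun x => (x, false)) μ₀ + Measure.map (fun x => (x, true)) μ₀ := by
  rw [count_bool_eq]
  ext s hs
  rw [Measure.prod_add, Measure.add_apply, Measure.add_apply,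
    Measure.prod_dirac, Measure.prod_dirac]

lemma integral_prod_count_bool {M₀ : Type*} [MeasurableSpace M₀] (μ₀ : Measure M₀)
    [SFinite μ₀] {E : Type*} [NormedAddCommGroup E] [NormedSpace ℝ E]
    (f : M₀ → E) (c : Bool → ℝ) (hc : ∀ p, c p ≠ 0) :
    ∫ y : M₀ × Bool, c y.2 • f y.1 ∂(μ₀.prod (Measure.count : Measure Bool))
      = (c false + c true) • ∫ x, f x ∂μ₀ := by
  have hemb : ∀ p : Bool, MeasurableEmbedding (fun x : M₀ => (x, p)) := fun p =>
    measurableEmbedding_prod_mk_right p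
  rw [prod_count_bool]
  set G : M₀ × Bool → E := fun y => c y.2 • f y.1 with hG
  by_cases hint : Integrable f μ₀
  · have h1 : ∀ p : Bool, Integrable G (Measure.map (fun x : M₀ => (x, p)) μ₀) := by
      intro p
      rw [(hemb p).integrable_map_iff]
      exact (hint.smul (c p))
    rw [integral_add_measure (h1 false) (h1 true), (hemb false).integral_map,
      (hemb true).integral_map]
    simp only [hG, integral_smul, add_smul]
  · have h2 : ¬ Integrable G
        (Measure.map (fun x : M₀ => (x, false)) μ₀
          + Measure.map (fun x : M₀ => (x, true)) μ₀) := by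
      intro h
      have h3 : Integrable G (Measure.map (fun x : M₀ => (x, false)) μ₀) :=
        h.mono_measure (Measure.le_add_right le_rfl)
      rw [(hemb false).integrable_map_iff] at h3
      have h4 : Integrable (fun x => (c false)⁻¹ • (c false • f x)) μ₀ := h3.smul _
      simp only [inv_smul_smul₀ (hc false)] at h4
      exact hint h4
    rw [integral_undef h2, integral_undef hint, smul_zero]

/-- Starting from a continuous frame of rank `n` for the Krein space
`(K, [·,·])`, `[h,k] = ⟪h, J k⟫_ℂ`, over a finite positive measure space `(M₀, μ₀)`,
duplicate the index set to `M = M₀ × {-1,+1}` (here `{-1,+1}` is modelled by `Bool`,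
`p = true ↦ +1`, `p = false ↦ -1`) with the product of `μ₀` and the counting measure,
and set `η_{(x,p)}^i := η_x^i`.  Then the doubled family is a continuous frame with
bounds `2a ≤ 2b`, yet the sesquilinear form of `𝒮 = T*T` taken with respect to the
signed measure (sign `p`) vanishes identically; hence `𝒮 = 0`, which is not invertible. -/
theorem signed_measure_frame_operator_zero
    {K : Type*} [NormedAddCommGroup K] [InnerProductSpace ℂ K] [CompleteSpace K]
    [Nontrivial K]
    (J : K →L[ℂ] K) (hJsa : IsSelfAdjoint J) (hJ2 : ∀ k : K, J (J k) = k)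
    {M₀ : Type*} [MeasurableSpace M₀] (μ₀ : Measure M₀) [IsFiniteMeasure μ₀]
    (n : ℕ) (η : Fin n → M₀ → K)
    (hmeas : ∀ (i : Fin n) (k : K), Measurable fun x : M₀ => ⟪η i x, k⟫_ℂ)
    (a b : ℝ) (ha : 0 < a) (hab : a ≤ b)
    (hframe : ∀ k : K,
      a * ‖k‖ ^ 2 ≤ ∑ i : Fin n, ∫ x, ‖⟪η i x, J k⟫_ℂ‖ ^ 2 ∂μ₀ ∧
      ∑ i : Fin n, ∫ x, ‖⟪η i x, J k⟫_ℂ‖ ^ 2 ∂μ₀ ≤ b * ‖k‖ ^ 2) :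
    (∀ k : K,
      2 * a * ‖k‖ ^ 2 ≤
        ∑ i : Fin n, ∫ y : M₀ × Bool, ‖⟪η i y.1, J k⟫_ℂ‖ ^ 2
          ∂(μ₀.prod (Measure.count : Measure Bool)) ∧
      ∑ i : Fin n, ∫ y : M₀ × Bool, ‖⟪η i y.1, J k⟫_ℂ‖ ^ 2
          ∂(μ₀.prod (Measure.count : Measure Bool)) ≤ 2 * b * ‖k‖ ^ 2) ∧
    (∀ h k : K,
      ∑ i : Fin n, ∫ y : M₀ × Bool,
          (if y.2 then (1 : ℂ) else -1) * ⟪η i y.1, J k⟫_ℂ * ⟪h, J (η i y.1)⟫_ℂ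
          ∂(μ₀.prod (Measure.count : Measure Bool)) = 0) ∧
    (∀ S' : K →L[ℂ] K,
      (∀ h k : K,
        ⟪h, J (S' k)⟫_ℂ =
          ∑ i : Fin n, ∫ y : M₀ × Bool,
            (if y.2 then (1 : ℂ) else -1) * ⟪η i y.1, J k⟫_ℂ * ⟪h, J (η i y.1)⟫_ℂ
            ∂(μ₀.prod (Measure.count : Measure Bool))) →
      S' = 0 ∧ ¬ Function.Bijective S') := by
  have key1 : ∀ (i : Fin n) (k : K),
      ∫ y : M₀ × Bool, ‖⟪η i y.1, J k⟫_ℂ‖ ^ 2 ∂(μ₀.prod (Measure.count : Measure Bool))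
        = 2 * ∫ x, ‖⟪η i x, J k⟫_ℂ‖ ^ 2 ∂μ₀ := by
    intro i k
    have := integral_prod_count_bool μ₀ (fun x => ‖⟪η i x, J k⟫_ℂ‖ ^ 2)
      (fun _ => (1 : ℝ)) (by intro p; norm_num)
    have h2 : (1 : ℝ) + 1 = 2 := by norm_num
    simpa [smul_eq_mul, h2] using this
  have key2 : ∀ (h k : K) (i : Fin n),
      ∫ y : M₀ × Bool,
          (if y.2 then (1 : ℂ) else -1) * ⟪η i y.1, J k⟫_ℂ * ⟪h, J (η i y.1)⟫_ℂ
          ∂(μ₀.prod (Measure.count : Measure Bool)) = 0 := by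
    intro h k i
    have heq : (fun y : M₀ × Bool =>
          (if y.2 then (1 : ℂ) else -1) * ⟪η i y.1, J k⟫_ℂ * ⟪h, J (η i y.1)⟫_ℂ)
        = fun y : M₀ × Bool =>
            (if y.2 then (1 : ℝ) else -1) • (⟪η i y.1, J k⟫_ℂ * ⟪h, J (η i y.1)⟫_ℂ) := by
      funext y
      rcases y with ⟨x, p⟩
      cases p <;> simp [mul_assoc]
    rw [heq, integral_prod_count_bool μ₀
      (fun x => ⟪η i x, J k⟫_ℂ * ⟪h, J (η i x)⟫_ℂ)
      (fun p => if p then (1 : ℝ) else -1) (by intro p; cases p <;> norm_num)]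
    norm_num
  refine ⟨?_, fun h k => Finset.sum_eq_zero fun i _ => key2 h k i, ?_⟩
  · intro k
    obtain ⟨hl, hr⟩ := hframe k
    have hsum : ∑ i : Fin n, ∫ y : M₀ × Bool, ‖⟪η i y.1, J k⟫_ℂ‖ ^ 2
          ∂(μ₀.prod (Measure.count : Measure Bool))
        = 2 * ∑ i : Fin n, ∫ x, ‖⟪η i x, J k⟫_ℂ‖ ^ 2 ∂μ₀ := by
      rw [Finset.mul_sum]
      exact Finset.sum_congr rfl fun i _ => key1 i k
    rw [hsum]
    constructor
    · nlinarith
    · nlinarith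
  · intro S' hS
    have hzero : ∀ k, S' k = 0 := by
      intro k
      have h0 : J (S' k) = 0 := by
        refine ext_inner_left ℂ fun v => ?_
        rw [inner_zero_right, hS v k]
        exact Finset.sum_eq_zero fun i _ => key2 v k i
      have h1 := hJ2 (S' k)
      rw [h0, map_zero] at h1
      exact h1.symm
    refine ⟨by ext k; simp [hzero k], ?_⟩
    intro hb
    obtain ⟨x, hx⟩ := exists_ne (0 : K)
    exact hx (hb.injective (by rw [hzero x, hzero 0]))
end

section
/- Let K be a complex Hilbert space with fundamental symmetry J, [h,k] := ⟨h, J k⟩, let {η_x^1,…,η_x^n}_{x∈M} be a continuous frame of rank n for (K,[·,·]) with frame bounds 0 < a ≤ b and frame operator S. Then S∘J and J∘S are positive invertible self-adjoint operators on the Hilbert space K; letting R denote the positive square root of S∘J and Q the positive square root of J∘S (both invertible), the families {R⁻¹η_x^1,…,R⁻¹η_x^n}_{x∈M} and {Q⁻¹Jη_x^1,…,Q⁻¹Jη_x^n}_{x∈M} are Parseval continuous frames of rank n for (K,[·,·]): for all k ∈ K, ∑_{i=1}^n ∫_M |[R⁻¹η_x^i, k]|² dμ(x) = ‖k‖² and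 ∑_{i=1}^n ∫_M |[Q⁻¹Jη_x^i, k]|² dμ(x) = ‖k‖². -/
open MeasureTheory
open scoped InnerProductSpace

private lemma conj_mul_self' (z : ℂ) : (starRingEnd ℂ) z * z = ((‖z‖ ^ 2 : ℝ) : ℂ) := by
  rw [mul_comm, Complex.mul_conj, Complex.normSq_eq_norm_sq]

/-- For a continuous frame `{η_x^i}` of rank `n` for the Krein space
`(K, [·,·])`, `[h,k] = ⟪h, J k⟫_ℂ`, with frame operator `S`, the operators `S∘J` and
`J∘S` are positive, self-adjoint and invertible; and if `R` (resp. `Q`) is the positive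
invertible square root of `S∘J` (resp. `J∘S`) with inverse `R⁻¹` (resp. `Q⁻¹`), then
`{R⁻¹η_x^i}` and `{Q⁻¹Jη_x^i}` are Parseval continuous frames of rank `n` for `(K,[·,·])`. -/
theorem parseval_frames_from_sqrt
    {K : Type*} [NormedAddCommGroup K] [InnerProductSpace ℂ K] [CompleteSpace K]
    (J : K →L[ℂ] K) (hJsa : IsSelfAdjoint J) (hJ2 : ∀ k : K, J (J k) = k)
    {M : Type*} [MeasurableSpace M] (μ : Measure M)
    (n : ℕ) (η : Fin n → M → K)
    (hmeas : ∀ (i : Fin n) (k : K), Measurable fun x : M => ⟪η i x, k⟫_ℂ)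
    (a b : ℝ) (ha : 0 < a) (hab : a ≤ b)
    (hframe : ∀ k : K,
      a * ‖k‖ ^ 2 ≤ ∑ i : Fin n, ∫ x, ‖⟪η i x, J k⟫_ℂ‖ ^ 2 ∂μ ∧
      ∑ i : Fin n, ∫ x, ‖⟪η i x, J k⟫_ℂ‖ ^ 2 ∂μ ≤ b * ‖k‖ ^ 2)
    (S : K →L[ℂ] K)
    (hS : ∀ k₁ k₂ : K,
      ⟪k₁, J (S k₂)⟫_ℂ = ∑ i : Fin n, ∫ x, ⟪k₁, J (η i x)⟫_ℂ * ⟪η i x, J k₂⟫_ℂ ∂μ) :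
    (S ∘L J).IsPositive ∧ (J ∘L S).IsPositive ∧
    Function.Bijective (S ∘L J) ∧ Function.Bijective (J ∘L S) ∧
    (∀ R Rinv : K →L[ℂ] K, R.IsPositive → R ∘L R = S ∘L J →
      R ∘L Rinv = 1 → Rinv ∘L R = 1 →
      ∀ k : K, ∑ i : Fin n, ∫ x, ‖⟪Rinv (η i x), J k⟫_ℂ‖ ^ 2 ∂μ = ‖k‖ ^ 2) ∧
    (∀ Q Qinv : K →L[ℂ] K, Q.IsPositive → Q ∘L Q = J ∘L S →
      Q ∘L Qinv = 1 → Qinv ∘L Q = 1 →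
      ∀ k : K, ∑ i : Fin n, ∫ x, ‖⟪Qinv (J (η i x)), J k⟫_ℂ‖ ^ 2 ∂μ = ‖k‖ ^ 2) := by
  have hJi : ∀ x y : K, ⟪J x, y⟫_ℂ = ⟪x, J y⟫_ℂ :=
    ContinuousLinearMap.isSelfAdjoint_iff_isSymmetric.mp hJsa
  -- the key identity : the frame sum is the quadratic form of J∘S
  have hkey : ∀ w : K, ⟪w, J (S w)⟫_ℂ
      = ((∑ i : Fin n, ∫ x, ‖⟪η i x, J w⟫_ℂ‖ ^ 2 ∂μ : ℝ) : ℂ) := by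
    intro w
    rw [hS w w, Complex.ofReal_sum]
    refine Finset.sum_congr rfl fun i _ => ?_
    have h1 : ∫ x, ⟪w, J (η i x)⟫_ℂ * ⟪η i x, J w⟫_ℂ ∂μ
        = ∫ x, ((‖⟪η i x, J w⟫_ℂ‖ ^ 2 : ℝ) : ℂ) ∂μ := by
      congr 1
      funext x
      rw [← conj_mul_self']
      congr 1
      rw [inner_conj_symm, hJi]
    rw [h1]
    exact integral_ofReal
  -- symmetry of J∘S
  have hTsym : ∀ x y : K, ⟪J (S x), y⟫_ℂ = ⟪x, J (S y)⟫_ℂ := by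
    intro x y
    rw [← inner_conj_symm (J (S x)) y, hS y x, hS x y, map_sum]
    refine Finset.sum_congr rfl fun i _ => ?_
    rw [← integral_conj]
    congr 1
    funext z
    rw [map_mul, inner_conj_symm, inner_conj_symm, hJi, ← hJi x (η i z), mul_comm]
  have hTsa : IsSelfAdjoint (J ∘L S) :=
    ContinuousLinearMap.isSelfAdjoint_iff_isSymmetric.mpr fun x y => hTsym x y
  -- the quadratic form of J∘S
  have hQF : ∀ x : K, ⟪(J ∘L S) x, x⟫_ℂ
      = ((∑ i : Fin n, ∫ t, ‖⟪η i t, J x⟫_ℂ‖ ^ 2 ∂μ : ℝ) : ℂ) := by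
    intro x
    rw [ContinuousLinearMap.comp_apply, hTsym x x]
    exact hkey x
  have hTpos : (J ∘L S).IsPositive := by
    refine ⟨ContinuousLinearMap.isSelfAdjoint_iff_isSymmetric.mp hTsa, fun x => ?_⟩
    rw [ContinuousLinearMap.reApplyInnerSelf_apply, hQF x]
    simpa using le_trans (mul_nonneg ha.le (sq_nonneg ‖x‖)) (hframe x).1
  -- S∘J = J ∘ (J∘S) ∘ J
  have hSJ_eq : S ∘L J = J ∘L ((J ∘L S) ∘L J) := by
    ext k
    simp [hJ2]
  have hSJpos : (S ∘L J).IsPositive := by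
    rw [hSJ_eq]
    have := hTpos.conj_adjoint J
    rwa [hJsa.adjoint_eq] at this
  -- lower bound : a‖k‖ ≤ ‖(J∘S) k‖
  have hlow : ∀ k : K, a * ‖k‖ ≤ ‖(J ∘L S) k‖ := by
    intro k
    rcases eq_or_ne k 0 with rfl | hk
    · simp
    · have h1 : a * ‖k‖ ^ 2 ≤ Complex.re ⟪(J ∘L S) k, k⟫_ℂ := by
        rw [hQF k, Complex.ofReal_re]
        exact (hframe k).1
      have h2 : Complex.re ⟪(J ∘L S) k, k⟫_ℂ ≤ ‖(J ∘L S) k‖ * ‖k‖ := by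
        refine le_trans ?_ (norm_inner_le_norm (𝕜 := ℂ) ((J ∘L S) k) k)
        exact le_trans (le_abs_self _) (Complex.abs_re_le_norm ⟪(J ∘L S) k, k⟫_ℂ)
      have hk' : (0 : ℝ) < ‖k‖ := norm_pos_iff.mpr hk
      nlinarith
  have hTinj : Function.Injective (J ∘L S) := by
    intro x y hxy
    have h := hlow (x - y)
    rw [map_sub, hxy, sub_self, norm_zero] at h
    have h0 : ‖x - y‖ ≤ 0 := by nlinarith [norm_nonneg (x - y)]
    exact sub_eq_zero.mp (norm_eq_zero.mp (le_antisymm h0 (norm_nonneg _)))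
  -- antilipschitz, hence closed range
  have hanti : AntilipschitzWith (⟨a⁻¹, inv_nonneg.mpr ha.le⟩ : NNReal) (J ∘L S) := by
    refine ContinuousLinearMap.antilipschitz_of_bound _ fun x => ?_
    have h := hlow x
    calc ‖x‖ = a⁻¹ * (a * ‖x‖) := by field_simp
    _ ≤ a⁻¹ * ‖(J ∘L S) x‖ := mul_le_mul_of_nonneg_left h (inv_nonneg.mpr ha.le)
  have hclosed : IsClosed (Set.range (J ∘L S)) :=
    hanti.isClosed_range (J ∘L S).uniformContinuous
  -- trivial orthogonal complement of the range
  have horth : (LinearMap.range ((J ∘L S : K →L[ℂ] K) : K →ₗ[ℂ] K))ᗮ = ⊥ := by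
    rw [Submodule.eq_bot_iff]
    intro y hy
    have h0 : ⟪(J ∘L S) y, y⟫_ℂ = 0 :=
      (Submodule.mem_orthogonal _ y).mp hy _ (LinearMap.mem_range_self _ y)
    have h1 : ((∑ i : Fin n, ∫ t, ‖⟪η i t, J y⟫_ℂ‖ ^ 2 ∂μ : ℝ) : ℂ) = 0 := by
      rw [← hQF y]
      exact h0
    have hF0 : (∑ i : Fin n, ∫ t, ‖⟪η i t, J y⟫_ℂ‖ ^ 2 ∂μ : ℝ) = 0 := by
      exact_mod_cast h1
    have h2 := (hframe y).1
    have h3 : ‖y‖ ^ 2 = 0 := le_antisymm (by nlinarith) (sq_nonneg _)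
    exact norm_eq_zero.mp ((pow_eq_zero_iff two_ne_zero).mp h3)
  have hTsurj : Function.Surjective (J ∘L S) := by
    have hcl : IsClosed ((LinearMap.range ((J ∘L S : K →L[ℂ] K) : K →ₗ[ℂ] K) : Submodule ℂ K) : Set K) := by
      rw [LinearMap.coe_range]
      exact hclosed
    haveI : CompleteSpace (LinearMap.range ((J ∘L S : K →L[ℂ] K) : K →ₗ[ℂ] K)) := hcl.completeSpace_coe
    have htop : LinearMap.range ((J ∘L S : K →L[ℂ] K) : K →ₗ[ℂ] K) = ⊤ := Submodule.orthogonal_eq_bot_iff.mp horth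
    exact LinearMap.range_eq_top.mp htop
  have hTbij : Function.Bijective (J ∘L S) := ⟨hTinj, hTsurj⟩
  have hJbij : Function.Bijective J := Function.Involutive.bijective hJ2
  have hSJbij : Function.Bijective (S ∘L J) := by
    have hfun : ⇑(S ∘L J) = ⇑J ∘ (⇑(J ∘L S) ∘ ⇑J) := by
      funext k
      simp [hJ2]
    rw [hfun]
    exact hJbij.comp (hTbij.comp hJbij)
  -- applying an operator and its inverse
  have inv_apply : ∀ (A B : K →L[ℂ] K), A ∘L B = 1 → ∀ z : K, A (B z) = z := by
    intro A B h z
    simpa using DFunLike.congr_fun h z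
  refine ⟨hSJpos, hTpos, hSJbij, hTbij, ?_, ?_⟩
  · -- Parseval frame from R
    intro R Rinv hRpos hR2 hRr hRl k
    have hRsym : ∀ x y : K, ⟪R x, y⟫_ℂ = ⟪x, R y⟫_ℂ :=
      hRpos.1
    have hRinvsym : ∀ x y : K, ⟪Rinv x, y⟫_ℂ = ⟪x, Rinv y⟫_ℂ := by
      intro x y
      conv_lhs => rw [← inv_apply R Rinv hRr y]
      rw [← hRsym, inv_apply R Rinv hRr]
    set w := J (Rinv (J k)) with hw
    have hiw : ∀ (i : Fin n) (x' : M), ⟪Rinv (η i x'), J k⟫_ℂ = ⟪η i x', J w⟫_ℂ := by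
      intro i x'
      rw [hw, hJ2, hRinvsym]
    have hsum : ∑ i : Fin n, ∫ x, ‖⟪Rinv (η i x), J k⟫_ℂ‖ ^ 2 ∂μ
        = ∑ i : Fin n, ∫ x, ‖⟪η i x, J w⟫_ℂ‖ ^ 2 ∂μ := by
      refine Finset.sum_congr rfl fun i _ => ?_
      congr 1
      funext x
      rw [hiw]
    have hc : ⟪w, J (S w)⟫_ℂ = ((‖k‖ ^ 2 : ℝ) : ℂ) := by
      calc ⟪w, J (S w)⟫_ℂ = ⟪J (Rinv (J k)), J (S w)⟫_ℂ := by rw [← hw]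
      _ = ⟪Rinv (J k), J (J (S w))⟫_ℂ := hJi _ _
      _ = ⟪Rinv (J k), S w⟫_ℂ := by rw [hJ2]
      _ = ⟪Rinv (J k), (S ∘L J) (Rinv (J k))⟫_ℂ := by rw [hw]; rfl
      _ = ⟪Rinv (J k), R (R (Rinv (J k)))⟫_ℂ := by rw [← hR2]; rfl
      _ = ⟪R (Rinv (J k)), R (Rinv (J k))⟫_ℂ := (hRsym _ _).symm
      _ = ⟪J k, J k⟫_ℂ := by rw [inv_apply R Rinv hRr]
      _ = ⟪k, k⟫_ℂ := by rw [hJi, hJ2]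
      _ = ((‖k‖ ^ 2 : ℝ) : ℂ) := by
            rw [inner_self_eq_norm_sq_to_K]
            exact (Complex.ofReal_pow ‖k‖ 2).symm
    have hfin := hkey w
    rw [hc] at hfin
    have hfw : (∑ i : Fin n, ∫ x, ‖⟪η i x, J w⟫_ℂ‖ ^ 2 ∂μ : ℝ) = ‖k‖ ^ 2 := by
      exact_mod_cast hfin.symm
    rw [hsum, hfw]
  · -- Parseval frame from Q
    intro Q Qinv hQpos hQ2 hQr hQl k
    have hQsym : ∀ x y : K, ⟪Q x, y⟫_ℂ = ⟪x, Q y⟫_ℂ :=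
      hQpos.1
    have hQinvsym : ∀ x y : K, ⟪Qinv x, y⟫_ℂ = ⟪x, Qinv y⟫_ℂ := by
      intro x y
      conv_lhs => rw [← inv_apply Q Qinv hQr y]
      rw [← hQsym, inv_apply Q Qinv hQr]
    set w := Qinv (J k) with hw
    have hiw : ∀ (i : Fin n) (x' : M), ⟪Qinv (J (η i x')), J k⟫_ℂ = ⟪η i x', J w⟫_ℂ := by
      intro i x'
      rw [hw, hQinvsym, ← hJi]
    have hsum : ∑ i : Fin n, ∫ x, ‖⟪Qinv (J (η i x)), J k⟫_ℂ‖ ^ 2 ∂μ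
        = ∑ i : Fin n, ∫ x, ‖⟪η i x, J w⟫_ℂ‖ ^ 2 ∂μ := by
      refine Finset.sum_congr rfl fun i _ => ?_
      congr 1
      funext x
      rw [hiw]
    have hc : ⟪w, J (S w)⟫_ℂ = ((‖k‖ ^ 2 : ℝ) : ℂ) := by
      calc ⟪w, J (S w)⟫_ℂ = ⟪w, (J ∘L S) w⟫_ℂ := rfl
      _ = ⟪w, Q (Q w)⟫_ℂ := by rw [← hQ2]; rfl
      _ = ⟪Q w, Q w⟫_ℂ := (hQsym _ _).symm
      _ = ⟪J k, J k⟫_ℂ := by rw [hw, inv_apply Q Qinv hQr]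
      _ = ⟪k, k⟫_ℂ := by rw [hJi, hJ2]
      _ = ((‖k‖ ^ 2 : ℝ) : ℂ) := by
            rw [inner_self_eq_norm_sq_to_K]
            exact (Complex.ofReal_pow ‖k‖ 2).symm
    have hfin := hkey w
    rw [hc] at hfin
    have hfw : (∑ i : Fin n, ∫ x, ‖⟪η i x, J w⟫_ℂ‖ ^ 2 ∂μ : ℝ) = ‖k‖ ^ 2 := by
      exact_mod_cast hfin.symm
    rw [hsum, hfw]
end

section
/- (Reproducing kernel identity) Let K be a complex Hilbert space with fundamental symmetry J, [h,k] := ⟨h, J k⟩, let {η_x^1,…,η_x^n}_{x∈M} be a continuous frame of rank n for (K,[·,·]) with frame operator S (bijective with bounded inverse), and set K_{ij}(x,y) := [η_x^i, S⁻¹η_y^j]. Then for every k ∈ K, every x ∈ M and every i = 1,…,n: [η_x^i, k] = ∑_{j=1}^n ∫_M K_{ij}(x,y) · [η_y^j, k] dμ(y); moreover the kernel satisfies the symmetry conj(K_{ij}(x,y)) = K_{ji}(y,x) for all x, y ∈ M and i, j. -/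
open MeasureTheory ComplexConjugate
open scoped InnerProductSpace

/-- **Reproducing kernel identity.** For a continuous frame `{η_x^i}` of
rank `n` for the Krein space `(K, [·,·])`, `[h,k] = ⟪h, J k⟫_ℂ`, with frame operator `S`
and bounded inverse `S⁻¹`, the kernel `K_{ij}(x,y) = [η_x^i, S⁻¹η_y^j]` reproduces the
analysis transforms: `[η_x^i, k] = ∑_j ∫ K_{ij}(x,y)·[η_y^j, k] dμ(y)`, and it satisfies
the symmetry `conj (K_{ij}(x,y)) = K_{ji}(y,x)`. -/
theorem reproducing_kernel_identity
    {K : Type*} [NormedAddCommGroup K] [InnerProductSpace ℂ K] [CompleteSpace K]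
    (J : K →L[ℂ] K) (hJsa : IsSelfAdjoint J) (hJ2 : ∀ k : K, J (J k) = k)
    {M : Type*} [MeasurableSpace M] (μ : Measure M)
    (n : ℕ) (η : Fin n → M → K)
    (hmeas : ∀ (i : Fin n) (k : K), Measurable fun x : M => ⟪η i x, k⟫_ℂ)
    (a b : ℝ) (ha : 0 < a) (hab : a ≤ b)
    (hframe : ∀ k : K,
      a * ‖k‖ ^ 2 ≤ ∑ i : Fin n, ∫ x, ‖⟪η i x, J k⟫_ℂ‖ ^ 2 ∂μ ∧
      ∑ i : Fin n, ∫ x, ‖⟪η i x, J k⟫_ℂ‖ ^ 2 ∂μ ≤ b * ‖k‖ ^ 2)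
    (S : K →L[ℂ] K)
    (hS : ∀ k₁ k₂ : K,
      ⟪k₁, J (S k₂)⟫_ℂ = ∑ i : Fin n, ∫ x, ⟪k₁, J (η i x)⟫_ℂ * ⟪η i x, J k₂⟫_ℂ ∂μ)
    (Sinv : K →L[ℂ] K) (hSinv₁ : S ∘L Sinv = 1) (hSinv₂ : Sinv ∘L S = 1) :
    (∀ (k : K) (x : M) (i : Fin n),
      ⟪η i x, J k⟫_ℂ =
        ∑ j : Fin n, ∫ y, ⟪η i x, J (Sinv (η j y))⟫_ℂ * ⟪η j y, J k⟫_ℂ ∂μ) ∧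
    (∀ (x y : M) (i j : Fin n),
      conj ⟪η i x, J (Sinv (η j y))⟫_ℂ = ⟪η j y, J (Sinv (η i x))⟫_ℂ) := by
  -- J is self-adjoint: move J across the inner product
  have hJ : ∀ u v : K, ⟪J u, v⟫_ℂ = ⟪u, J v⟫_ℂ := by
    intro u v
    conv_lhs => rw [← hJsa.adjoint_eq]
    exact ContinuousLinearMap.adjoint_inner_left J v u
  -- Hermitian symmetry of the Krein inner product
  have hC : ∀ u v : K, conj ⟪u, J v⟫_ℂ = ⟪v, J u⟫_ℂ := by
    intro u v
    rw [inner_conj_symm, hJ]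
  -- S is symmetric for the Krein inner product
  have hA : ∀ u v : K, ⟪u, J (S v)⟫_ℂ = conj ⟪v, J (S u)⟫_ℂ := by
    intro u v
    rw [hS, hS, map_sum]
    refine Finset.sum_congr rfl fun j _ => ?_
    rw [← integral_conj]
    congr 1
    funext y
    rw [map_mul, hC, hC, mul_comm]
  have hSsym : ∀ u v : K, ⟪S u, J v⟫_ℂ = ⟪u, J (S v)⟫_ℂ := by
    intro u v
    rw [hA, hC]
  have hSS : ∀ v : K, S (Sinv v) = v := by
    intro v
    have := ContinuousLinearMap.ext_iff.mp hSinv₁ v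
    simpa using this
  have hSinvsym : ∀ u v : K, ⟪Sinv u, J v⟫_ℂ = ⟪u, J (Sinv v)⟫_ℂ := by
    intro u v
    calc ⟪Sinv u, J v⟫_ℂ = ⟪Sinv u, J (S (Sinv v))⟫_ℂ := by rw [hSS]
      _ = ⟪S (Sinv u), J (Sinv v)⟫_ℂ := (hSsym _ _).symm
      _ = ⟪u, J (Sinv v)⟫_ℂ := by rw [hSS]
  constructor
  · intro k x i
    apply (starRingEnd ℂ).injective
    calc conj ⟪η i x, J k⟫_ℂ
        = ⟪k, J (η i x)⟫_ℂ := hC _ _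
      _ = ⟪k, J (S (Sinv (η i x)))⟫_ℂ := by rw [hSS]
      _ = ∑ j : Fin n, ∫ y, ⟪k, J (η j y)⟫_ℂ * ⟪η j y, J (Sinv (η i x))⟫_ℂ ∂μ := hS _ _
      _ = ∑ j : Fin n, ∫ y, conj (⟪η i x, J (Sinv (η j y))⟫_ℂ * ⟪η j y, J k⟫_ℂ) ∂μ := by
          refine Finset.sum_congr rfl fun j _ => ?_
          congr 1
          funext y
          rw [map_mul, hC, hC, hSinvsym, mul_comm]
      _ = conj (∑ j : Fin n, ∫ y, ⟪η i x, J (Sinv (η j y))⟫_ℂ * ⟪η j y, J k⟫_ℂ ∂μ) := by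
          rw [map_sum]
          exact Finset.sum_congr rfl fun j _ => integral_conj
  · intro x y i j
    rw [hC, hSinvsym]
end

section
/- (Continuity of point evaluations on the range of the analysis operator) Let K be a complex Hilbert space with fundamental symmetry J, [h,k] := ⟨h, J k⟩, let {η_x^1,…,η_x^n}_{x∈M} be a continuous frame of rank n for (K,[·,·]) with frame operator S. Then for every x ∈ M and every i the number [η_x^i, S⁻¹η_x^i] = ⟨η_x^i, (J∘S⁻¹)η_x^i⟩ is a nonnegative real number, and for every k ∈ K and every x ∈ M: ∑_{i=1}^n |[η_x^i, k]|² ≤ (∑_{i=1}^n [η_x^i, S⁻¹η_x^i]) · (∑_{i=1}^n ∫_M |[η_y^i, k]|² dμ(y)). -/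
open MeasureTheory
open scoped InnerProductSpace

/-- For a continuous frame `{η_x^i}` of rank `n` for the Krein space
`(K, [·,·])`, `[h,k] = ⟪h, J k⟫_ℂ`, with frame operator `S` and bounded inverse `S⁻¹`,
the numbers `[η_x^i, S⁻¹η_x^i]` are nonnegative reals, and the point evaluations on the
range of the analysis operator are continuous:
`∑_i |[η_x^i, k]|² ≤ (∑_i [η_x^i, S⁻¹η_x^i]) · (∑_i ∫ |[η_y^i, k]|² dμ(y))`. -/
theorem point_evaluation_bound
    {K : Type*} [NormedAddCommGroup K] [InnerProductSpace ℂ K] [CompleteSpace K]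
    (J : K →L[ℂ] K) (hJsa : IsSelfAdjoint J) (hJ2 : ∀ k : K, J (J k) = k)
    {M : Type*} [MeasurableSpace M] (μ : Measure M)
    (n : ℕ) (η : Fin n → M → K)
    (hmeas : ∀ (i : Fin n) (k : K), Measurable fun x : M => ⟪η i x, k⟫_ℂ)
    (a b : ℝ) (ha : 0 < a) (hab : a ≤ b)
    (hframe : ∀ k : K,
      a * ‖k‖ ^ 2 ≤ ∑ i : Fin n, ∫ x, ‖⟪η i x, J k⟫_ℂ‖ ^ 2 ∂μ ∧
      ∑ i : Fin n, ∫ x, ‖⟪η i x, J k⟫_ℂ‖ ^ 2 ∂μ ≤ b * ‖k‖ ^ 2)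
    (S : K →L[ℂ] K)
    (hS : ∀ k₁ k₂ : K,
      ⟪k₁, J (S k₂)⟫_ℂ = ∑ i : Fin n, ∫ x, ⟪k₁, J (η i x)⟫_ℂ * ⟪η i x, J k₂⟫_ℂ ∂μ)
    (Sinv : K →L[ℂ] K) (hSinv₁ : S ∘L Sinv = 1) (hSinv₂ : Sinv ∘L S = 1) :
    (∀ (x : M) (i : Fin n),
      (⟪η i x, J (Sinv (η i x))⟫_ℂ).im = 0 ∧ 0 ≤ (⟪η i x, J (Sinv (η i x))⟫_ℂ).re) ∧
    (∀ (k : K) (x : M),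
      ∑ i : Fin n, ‖⟪η i x, J k⟫_ℂ‖ ^ 2 ≤
        (∑ i : Fin n, (⟪η i x, J (Sinv (η i x))⟫_ℂ).re) *
          (∑ i : Fin n, ∫ y, ‖⟪η i y, J k⟫_ℂ‖ ^ 2 ∂μ)) := by
  classical
  -- J is self-adjoint: move J across the inner product
  have hJadj : ∀ h g : K, ⟪J h, g⟫_ℂ = ⟪h, J g⟫_ℂ := by
    intro h g
    conv_lhs => rw [← hJsa.adjoint_eq]
    exact ContinuousLinearMap.adjoint_inner_left J g h
  have hSS : ∀ h : K, S (Sinv h) = h := fun h => by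
    have := DFunLike.congr_fun hSinv₁ h; simpa using this
  have hSinvS : ∀ h : K, Sinv (S h) = h := fun h => by
    have := DFunLike.congr_fun hSinv₂ h; simpa using this
  -- the quadratic form of J∘S is the sum of integrals of squares
  have hB : ∀ k : K, ⟪k, J (S k)⟫_ℂ
      = ((∑ i : Fin n, ∫ x, ‖⟪η i x, J k⟫_ℂ‖ ^ 2 ∂μ : ℝ) : ℂ) := by
    intro k
    rw [hS k k]
    push_cast
    refine Finset.sum_congr rfl fun i _ => ?_
    calc ∫ x, ⟪k, J (η i x)⟫_ℂ * ⟪η i x, J k⟫_ℂ ∂μ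
        = ∫ x, ((‖⟪η i x, J k⟫_ℂ‖ ^ 2 : ℝ) : ℂ) ∂μ := by
          refine integral_congr_ae (Filter.Eventually.of_forall fun x => ?_)
          have h1 : ⟪k, J (η i x)⟫_ℂ = (starRingEnd ℂ) ⟪η i x, J k⟫_ℂ := by
            rw [← inner_conj_symm k (J (η i x)), hJadj]
          dsimp only
          rw [h1, RCLike.conj_mul]
          norm_cast
      _ = _ := integral_ofReal
  -- J ∘ S is self-adjoint
  have hJS : ∀ u v : K, ⟪J (S u), v⟫_ℂ = ⟪u, J (S v)⟫_ℂ := by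
    intro u v
    calc ⟪J (S u), v⟫_ℂ = (starRingEnd ℂ) ⟪v, J (S u)⟫_ℂ := (inner_conj_symm _ _).symm
      _ = (starRingEnd ℂ) (∑ i : Fin n, ∫ x, ⟪v, J (η i x)⟫_ℂ * ⟪η i x, J u⟫_ℂ ∂μ) := by
          rw [hS v u]
      _ = ∑ i : Fin n, ∫ x, ⟪u, J (η i x)⟫_ℂ * ⟪η i x, J v⟫_ℂ ∂μ := by
          rw [map_sum]
          refine Finset.sum_congr rfl fun i _ => ?_
          rw [← integral_conj]
          refine integral_congr_ae (Filter.Eventually.of_forall fun x => ?_)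
          have e1 : (starRingEnd ℂ) ⟪v, J (η i x)⟫_ℂ = ⟪η i x, J v⟫_ℂ := by
            rw [inner_conj_symm, hJadj]
          have e2 : (starRingEnd ℂ) ⟪η i x, J u⟫_ℂ = ⟪u, J (η i x)⟫_ℂ := by
            rw [inner_conj_symm, hJadj]
          dsimp only
          rw [map_mul, e1, e2, mul_comm]
      _ = ⟪u, J (S v)⟫_ℂ := (hS u v).symm
  -- J ∘ Sinv is self-adjoint
  have hJSinv : ∀ u v : K, ⟪J (Sinv u), v⟫_ℂ = ⟪u, J (Sinv v)⟫_ℂ := by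
    intro u v
    calc ⟪J (Sinv u), v⟫_ℂ = ⟪Sinv u, J v⟫_ℂ := hJadj _ _
      _ = ⟪Sinv u, J (S (Sinv v))⟫_ℂ := by rw [hSS v]
      _ = ⟪J (S (Sinv u)), Sinv v⟫_ℂ := (hJS _ _).symm
      _ = ⟪J u, Sinv v⟫_ℂ := by rw [hSS u]
      _ = ⟪u, J (Sinv v)⟫_ℂ := hJadj _ _
  -- the quadratic form of J∘Sinv is a nonnegative real
  have hpos : ∀ h : K, ⟪h, J (Sinv h)⟫_ℂ
      = ((∑ i : Fin n, ∫ x, ‖⟪η i x, J (Sinv h)⟫_ℂ‖ ^ 2 ∂μ : ℝ) : ℂ) := by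
    intro h
    calc ⟪h, J (Sinv h)⟫_ℂ = ⟪S (Sinv h), J (Sinv h)⟫_ℂ := by rw [hSS h]
      _ = (starRingEnd ℂ) ⟪J (Sinv h), S (Sinv h)⟫_ℂ := (inner_conj_symm _ _).symm
      _ = (starRingEnd ℂ) ⟪Sinv h, J (S (Sinv h))⟫_ℂ := by rw [hJadj]
      _ = (starRingEnd ℂ)
            ((∑ i : Fin n, ∫ x, ‖⟪η i x, J (Sinv h)⟫_ℂ‖ ^ 2 ∂μ : ℝ) : ℂ) := by rw [hB]
      _ = _ := Complex.conj_ofReal _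
  have hsum_nonneg : ∀ h : K,
      0 ≤ ∑ i : Fin n, ∫ x, ‖⟪η i x, J h⟫_ℂ‖ ^ 2 ∂μ := fun h =>
    Finset.sum_nonneg fun i _ => integral_nonneg fun x => by positivity
  -- the positive semidefinite form ⟪·, J (Sinv ·)⟫ as a pre-inner-product core
  let core : PreInnerProductSpace.Core ℂ K :=
    { inner := fun h g => ⟪h, J (Sinv g)⟫_ℂ
      conj_inner_symm := fun x y => by
        rw [inner_conj_symm, hJSinv]
      re_inner_nonneg := fun x => by
        rw [hpos x]
        simpa using hsum_nonneg (Sinv x)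
      add_left := fun x y z => by rw [inner_add_left]
      smul_left := fun x y r => by rw [inner_smul_left] }
  -- Cauchy–Schwarz for this form
  have CS : ∀ u v : K, ‖⟪u, J (Sinv v)⟫_ℂ‖ * ‖⟪u, J (Sinv v)⟫_ℂ‖ ≤
      (⟪u, J (Sinv u)⟫_ℂ).re * (⟪v, J (Sinv v)⟫_ℂ).re := by
    intro u v
    have h : ‖⟪u, J (Sinv v)⟫_ℂ‖ * ‖⟪v, J (Sinv u)⟫_ℂ‖ ≤
        RCLike.re ⟪u, J (Sinv u)⟫_ℂ * RCLike.re ⟪v, J (Sinv v)⟫_ℂ :=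
      InnerProductSpace.Core.inner_mul_inner_self_le (𝕜 := ℂ) (c := core) u v
    have hn : ‖⟪v, J (Sinv u)⟫_ℂ‖ = ‖⟪u, J (Sinv v)⟫_ℂ‖ := by
      conv_lhs => rw [← RCLike.norm_conj, inner_conj_symm, hJSinv]
    rw [hn] at h
    simpa using h
  refine ⟨fun x i => ?_, fun k x => ?_⟩
  · rw [hpos (η i x)]
    refine ⟨by simp, ?_⟩
    simpa using hsum_nonneg (Sinv (η i x))
  · have hD : (⟪S k, J (Sinv (S k))⟫_ℂ).re
        = ∑ i : Fin n, ∫ y, ‖⟪η i y, J k⟫_ℂ‖ ^ 2 ∂μ := by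
      have : ⟪S k, J (Sinv (S k))⟫_ℂ = ⟪S k, J k⟫_ℂ := by rw [hSinvS k]
      rw [this]
      have h2 : ⟪S k, J k⟫_ℂ = (starRingEnd ℂ) ⟪k, J (S k)⟫_ℂ := by
        rw [← inner_conj_symm (S k) (J k), hJadj]
      rw [h2, hB k]
      simp
    have hterm : ∀ i : Fin n, ‖⟪η i x, J k⟫_ℂ‖ ^ 2 ≤
        (⟪η i x, J (Sinv (η i x))⟫_ℂ).re *
          (∑ j : Fin n, ∫ y, ‖⟪η j y, J k⟫_ℂ‖ ^ 2 ∂μ) := by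
      intro i
      have h := CS (η i x) (S k)
      rw [hD] at h
      rw [hSinvS k] at h
      calc ‖⟪η i x, J k⟫_ℂ‖ ^ 2 = ‖⟪η i x, J k⟫_ℂ‖ * ‖⟪η i x, J k⟫_ℂ‖ := sq ‖⟪η i x, J k⟫_ℂ‖
        _ ≤ _ := h
    calc ∑ i : Fin n, ‖⟪η i x, J k⟫_ℂ‖ ^ 2
        ≤ ∑ i : Fin n, (⟪η i x, J (Sinv (η i x))⟫_ℂ).re *
            (∑ j : Fin n, ∫ y, ‖⟪η j y, J k⟫_ℂ‖ ^ 2 ∂μ) :=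
          Finset.sum_le_sum fun i _ => hterm i
      _ = _ := (Finset.sum_mul _ _ _).symm
end

section
/- Let H be a complex Hilbert space and let W : H → H be a bounded self-adjoint injective operator with 0 in the spectrum of W, and let |W| denote the absolute value of W (the positive square root of W∘W). Suppose {η_x^1,…,η_x^n}_{x∈M} is a continuous frame of rank n for the Hilbert space H with respect to a measure space (M,𝔅,μ), i.e. there exist 0 < a ≤ b with a‖k‖² ≤ ∑_{i=1}^n ∫_M |⟨η_x^i, k⟩|² dμ(x) ≤ b‖k‖² for all k ∈ H. Then there is no constant c > 0 such that c·⟨k, |W| k⟩ ≤ ∑_{i=1}^n ∫_M |⟨η_x^i, W k⟩|² dμ(x) for all k ∈ H; in particular, no continuous frame for H is a continuous frame for the Krein space H_W determined by the non-regular Gram operator W. -/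
set_option synthInstance.maxHeartbeats 1000000
set_option maxHeartbeats 1000000


open MeasureTheory
open scoped InnerProductSpace

/-- Let `W` be a bounded self-adjoint injective operator on a Hilbert
space `H` with `0 ∈ spec(W)` (a non-regular Gram operator), and let `|W|` be its absolute
value (the positive square root of `W∘W`).  Then no continuous frame `{η_x^i}` of rank `n`
for the Hilbert space `H` admits a lower frame bound in the `W`-metric: there is no
`c > 0` with `c·⟪k, |W| k⟫ ≤ ∑_i ∫ |⟪η_x^i, W k⟫|² dμ` for all `k`; in particular, no
continuous frame for `H` is a continuous frame for the Krein space `H_W`. -/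
theorem no_frame_for_nonregular_Krein
    {H : Type*} [NormedAddCommGroup H] [InnerProductSpace ℂ H] [CompleteSpace H]
    (W : H →L[ℂ] H) (hWsa : IsSelfAdjoint W) (hWinj : Function.Injective W)
    (hspec : (0 : ℂ) ∈ spectrum ℂ W)
    (absW : H →L[ℂ] H) (habs_pos : absW.IsPositive) (habs_sq : absW ∘L absW = W ∘L W)
    {M : Type*} [MeasurableSpace M] (μ : Measure M)
    (n : ℕ) (η : Fin n → M → H)
    (hmeas : ∀ (i : Fin n) (k : H), Measurable fun x : M => ⟪η i x, k⟫_ℂ)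
    (a b : ℝ) (ha : 0 < a) (hab : a ≤ b)
    (hframe : ∀ k : H,
      a * ‖k‖ ^ 2 ≤ ∑ i : Fin n, ∫ x, ‖⟪η i x, k⟫_ℂ‖ ^ 2 ∂μ ∧
      ∑ i : Fin n, ∫ x, ‖⟪η i x, k⟫_ℂ‖ ^ 2 ∂μ ≤ b * ‖k‖ ^ 2) :
    ¬ ∃ c : ℝ, 0 < c ∧ ∀ k : H,
        c * (⟪k, absW k⟫_ℂ).re ≤ ∑ i : Fin n, ∫ x, ‖⟪η i x, W k⟫_ℂ‖ ^ 2 ∂μ := by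
  rintro ⟨c, hc, hlow⟩
  have hb : 0 < b := ha.trans_le hab
  set T := absW with hT
  have hTsa : IsSelfAdjoint T := habs_pos.isSelfAdjoint
  -- moving a selfadjoint operator across the inner product
  have hmove : ∀ (A : H →L[ℂ] H), IsSelfAdjoint A → ∀ u v : H, ⟪A u, v⟫_ℂ = ⟪u, A v⟫_ℂ := by
    intro A hA u v
    conv_lhs => rw [← hA.adjoint_eq]
    rw [ContinuousLinearMap.adjoint_inner_left]
  have hre : ∀ x : H, (⟪x, x⟫_ℂ).re = ‖x‖ ^ 2 := by
    intro x
    rw [← RCLike.re_to_complex]; exact inner_self_eq_norm_sq x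
  -- `‖T k‖ = ‖W k‖`
  have hnorm : ∀ k : H, ‖T k‖ = ‖W k‖ := by
    intro k
    have h1 : ⟪T k, T k⟫_ℂ = ⟪k, (T ∘L T) k⟫_ℂ := by
      rw [hmove T hTsa]; rfl
    have h2 : ⟪W k, W k⟫_ℂ = ⟪k, (W ∘L W) k⟫_ℂ := by
      rw [hmove W hWsa]; rfl
    have h3 : ⟪T k, T k⟫_ℂ = ⟪W k, W k⟫_ℂ := by rw [h1, h2, habs_sq]
    have h4 := congrArg Complex.re h3
    rw [hre, hre] at h4
    calc ‖T k‖ = Real.sqrt (‖T k‖ ^ 2) := (Real.sqrt_sq (norm_nonneg _)).symm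
      _ = Real.sqrt (‖W k‖ ^ 2) := by rw [h4]
      _ = ‖W k‖ := Real.sqrt_sq (norm_nonneg _)
  -- key inequality: `c ⟪k, T k⟫ ≤ b ‖T k‖²`
  have hkey : ∀ k : H, c * (⟪k, T k⟫_ℂ).re ≤ b * ‖T k‖ ^ 2 := by
    intro k
    calc c * (⟪k, T k⟫_ℂ).re ≤ ∑ i : Fin n, ∫ x, ‖⟪η i x, W k⟫_ℂ‖ ^ 2 ∂μ := hlow k
      _ ≤ b * ‖W k‖ ^ 2 := (hframe (W k)).2
      _ = b * ‖T k‖ ^ 2 := by rw [hnorm]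
  -- square root of `T`
  have hT0 : (0 : H →L[ℂ] H) ≤ T := (ContinuousLinearMap.nonneg_iff_isPositive T).mpr habs_pos
  set S := CFC.sqrt T with hS
  have hS0 : (0 : H →L[ℂ] H) ≤ S := CFC.sqrt_nonneg T
  have hSpos : S.IsPositive := (ContinuousLinearMap.nonneg_iff_isPositive S).mp hS0
  have hSsa : IsSelfAdjoint S := hSpos.isSelfAdjoint
  have hSS : S ∘L S = T := by
    rw [← ContinuousLinearMap.mul_def]
    exact CFC.sqrt_mul_sqrt_self T hT0
  have hSSapp : ∀ k, S (S k) = T k := fun k => congrFun (congrArg DFunLike.coe hSS) k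
  have hTS : ∀ k : H, (⟪k, T k⟫_ℂ).re = ‖S k‖ ^ 2 := by
    intro k
    rw [← hSSapp, ← hmove S hSsa, hre]
  -- hence `c ‖S k‖² ≤ b ‖S (S k)‖²`
  have hstep : ∀ k : H, c * ‖S k‖ ^ 2 ≤ b * ‖S (S k)‖ ^ 2 := by
    intro k
    have h := hkey k
    rwa [hTS, ← hSSapp] at h
  -- `S` is injective
  have hSinj : Function.Injective S := by
    intro u v huv
    have h1 : T u = T v := by rw [← hSSapp, ← hSSapp, huv]
    apply hWinj
    have h2 : ‖W u - W v‖ = 0 := by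
      rw [← map_sub, ← hnorm, map_sub, h1, sub_self, norm_zero]
    exact sub_eq_zero.mp (norm_eq_zero.mp h2)
  -- a selfadjoint injective operator has dense range
  have hdense : ∀ (A : H →L[ℂ] H), IsSelfAdjoint A → Function.Injective A → DenseRange A := by
    intro A hA hinj
    have horth : (LinearMap.range (A : H →ₗ[ℂ] H) : Submodule ℂ H)ᗮ = ⊥ := by
      rw [Submodule.eq_bot_iff]
      intro v hv
      have hAv : ⟪A (A v), v⟫_ℂ = 0 := hv _ ⟨A v, rfl⟩
      rw [hmove A hA] at hAv
      have h0 : A v = 0 := inner_self_eq_zero.mp hAv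
      exact hinj (by simpa using h0)
    have htop := (Submodule.topologicalClosure_eq_top_iff (K := LinearMap.range (A : H →ₗ[ℂ] H))).mpr horth
    have : Dense (LinearMap.range (A : H →ₗ[ℂ] H) : Set H) :=
      Submodule.dense_iff_topologicalClosure_eq_top.mpr htop
    simpa [LinearMap.coe_range, DenseRange] using this
  -- by density: `c ‖v‖² ≤ b ‖S v‖²` for all `v`
  have hSbelow : ∀ v : H, c * ‖v‖ ^ 2 ≤ b * ‖S v‖ ^ 2 := by
    have hclosed : IsClosed {v : H | c * ‖v‖ ^ 2 ≤ b * ‖S v‖ ^ 2} := by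
      apply isClosed_le <;> fun_prop
    have hsub : Set.range S ⊆ {v : H | c * ‖v‖ ^ 2 ≤ b * ‖S v‖ ^ 2} := by
      rintro _ ⟨k, rfl⟩; exact hstep k
    intro v
    have hcl := hclosed.closure_subset_iff.mpr hsub
    have hv : v ∈ closure (Set.range S) := by
      rw [(hdense S hSsa hSinj).closure_range]; trivial
    exact hcl hv
  -- `W` is bounded below: `‖k‖ ≤ (b/c) ‖W k‖`
  have hWlow : ∀ k : H, ‖k‖ ≤ (b / c) * ‖W k‖ := by
    intro k
    have h1 := hSbelow k
    have h2 := hSbelow (S k)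
    rw [hSSapp, hnorm] at h2
    have h3 : (c * ‖k‖) ^ 2 ≤ (b * ‖W k‖) ^ 2 := by nlinarith [norm_nonneg (S k)]
    have h4 : c * ‖k‖ ≤ b * ‖W k‖ := by
      calc c * ‖k‖ = Real.sqrt ((c * ‖k‖) ^ 2) := (Real.sqrt_sq (by positivity)).symm
        _ ≤ Real.sqrt ((b * ‖W k‖) ^ 2) := Real.sqrt_le_sqrt h3
        _ = b * ‖W k‖ := Real.sqrt_sq (by positivity)
    rw [div_mul_eq_mul_div, le_div_iff₀ hc]
    linarith
  -- closed range
  have hK : (0 : ℝ) ≤ b / c := by positivity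
  have hanti : AntilipschitzWith ⟨b / c, hK⟩ W :=
    ContinuousLinearMap.antilipschitz_of_bound W (fun x => hWlow x)
  have hclosedrange : IsClosed (Set.range W) :=
    hanti.isClosed_range W.uniformContinuous
  -- dense range
  have hdenseW : DenseRange W := hdense W hWsa hWinj
  -- range = ⊤
  have hrange : LinearMap.range (W : H →ₗ[ℂ] H) = ⊤ := by
    have h1 : IsClosed ((LinearMap.range (W : H →ₗ[ℂ] H) : Submodule ℂ H) : Set H) := by
      simpa [LinearMap.coe_range] using hclosedrange
    have h2 := h1.submodule_topologicalClosure_eq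
    have h3 : (LinearMap.range (W : H →ₗ[ℂ] H) : Submodule ℂ H).topologicalClosure = ⊤ :=
      Submodule.dense_iff_topologicalClosure_eq_top.mp (by
        simpa [LinearMap.coe_range, DenseRange] using hdenseW)
    rw [h2] at h3
    exact h3
  have hker : LinearMap.ker (W : H →ₗ[ℂ] H) = ⊥ := LinearMap.ker_eq_bot.mpr hWinj
  -- W is invertible, contradicting 0 ∈ spectrum
  set e := ContinuousLinearEquiv.ofBijective W hker hrange with he
  have hunit : IsUnit W := by
    refine ⟨⟨W, (e.symm : H →L[ℂ] H), ?_, ?_⟩, rfl⟩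
    · ext x
      simp [ContinuousLinearMap.mul_def, he]
    · ext x
      simp [ContinuousLinearMap.mul_def, he]
  exact spectrum.not_isUnit_of_zero_mem ℂ hspec hunit
end

section
/- Let H be a complex Hilbert space and let W : H → H be a bounded self-adjoint operator with 0 not in the spectrum of W. Let |W| be the absolute value of W (positive, invertible) and |W|^{-1/2} the inverse of its positive square root. Let (M,𝔅,μ) be a measure space and η^i : M → H, i=1,…,n, weakly measurable maps, and let 0 < a ≤ b. Then {η_x^1,…,η_x^n}_{x∈M} is a continuous frame of rank n for the Hilbert space H with frame bounds a ≤ b (i.e. a‖k‖² ≤ ∑_{i=1}^n ∫_M |⟨η_x^i, k⟩|² dμ(x) ≤ b‖k‖² for all k ∈ H) if and only if {|W|^{-1/2}η_x^1,…,|W|^{-1/2}η_x^n}_{x∈M} is a continuous frame of rank n for the Krein space H_W with the same frame bounds, i.e. a·⟨k, |W| k⟩ ≤ ∑_{i=1}^n ∫_M |⟨|W|^{-1/2}η_x^i, W k⟩|² dμ(x) ≤ b·⟨k, |W| k⟩ for all k ∈ H. -/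
open MeasureTheory
open scoped InnerProductSpace

set_option synthInstance.maxHeartbeats 1000000 in
set_option maxHeartbeats 1000000 in
lemma commute_of_sq' {H : Type*} [NormedAddCommGroup H] [InnerProductSpace ℂ H] [CompleteSpace H]
    (W A : H →L[ℂ] H) (hW : IsSelfAdjoint W) (hA : A.IsPositive) (h : A * A = W * W) :
    Commute W A := by
  have hA0 : (0 : H →L[ℂ] H) ≤ A := (ContinuousLinearMap.nonneg_iff_isPositive A).2 hA
  have hB0 : (0 : H →L[ℂ] H) ≤ cfc (fun x : ℝ => |x|) W :=
    cfc_nonneg (fun x _ => abs_nonneg x)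
  have hBsq : cfc (fun x : ℝ => |x|) W * cfc (fun x : ℝ => |x|) W = W * W := by
    rw [← cfc_mul ..]
    simp only [abs_mul_abs_self]
    rw [cfc_mul _ _ W (by fun_prop) (by fun_prop), cfc_id' ℝ W]
  have hAB : A = cfc (fun x : ℝ => |x|) W := by
    rw [← CFC.sqrt_unique h hA0, ← CFC.sqrt_unique hBsq hB0]
  rw [hAB]
  nth_rw 1 [← cfc_id' ℝ W]
  exact cfc_commute_cfc _ _ W

lemma key_norm_eq {H : Type*} [NormedAddCommGroup H] [InnerProductSpace ℂ H] [CompleteSpace H]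
    (W : H →L[ℂ] H) (hWsa : IsSelfAdjoint W)
    (absW : H →L[ℂ] H) (habs_pos : absW.IsPositive) (habs_sq : absW ∘L absW = W ∘L W)
    (R : H →L[ℂ] H) (hR_pos : R.IsPositive) (hR_sq : R ∘L R = absW)
    (Rinv : H →L[ℂ] H) (hRinv₁ : R ∘L Rinv = 1) (hRinv₂ : Rinv ∘L R = 1)
    (k : H) : (⟪k, absW k⟫_ℂ).re = ‖Rinv (W k)‖ ^ 2 := by
  have habs_sq' : absW * absW = W * W := habs_sq
  have hR_sq' : R * R = absW := hR_sq
  have hRinv₁' : R * Rinv = 1 := hRinv₁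
  have hRinv₂' : Rinv * R = 1 := hRinv₂
  have hcomm : Commute W absW := commute_of_sq' W absW hWsa habs_pos habs_sq'
  have hN1 : (Rinv * Rinv) * absW = 1 := by
    rw [← hR_sq', mul_assoc, ← mul_assoc Rinv R R, hRinv₂', one_mul, hRinv₂']
  have hN2 : absW * (Rinv * Rinv) = 1 := by
    rw [← hR_sq', mul_assoc, ← mul_assoc R Rinv Rinv, hRinv₁', one_mul, hRinv₁']
  have hWN : W * (Rinv * Rinv) = (Rinv * Rinv) * W := by
    calc W * (Rinv * Rinv) = ((Rinv * Rinv) * absW) * (W * (Rinv * Rinv)) := by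
          rw [hN1, one_mul]
      _ = (Rinv * Rinv) * ((absW * W) * (Rinv * Rinv)) := by noncomm_ring
      _ = (Rinv * Rinv) * ((W * absW) * (Rinv * Rinv)) := by rw [← hcomm.eq]
      _ = ((Rinv * Rinv) * W) * (absW * (Rinv * Rinv)) := by noncomm_ring
      _ = (Rinv * Rinv) * W := by rw [hN2, mul_one]
  have hWNW : W * ((Rinv * Rinv) * W) = absW := by
    calc W * ((Rinv * Rinv) * W) = (W * (Rinv * Rinv)) * W := by noncomm_ring
      _ = (Rinv * Rinv) * (W * W) := by rw [hWN]; noncomm_ring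
      _ = ((Rinv * Rinv) * absW) * absW := by rw [← habs_sq']; noncomm_ring
      _ = absW := by rw [hN1, one_mul]
  have hRinv_sa : IsSelfAdjoint Rinv := by
    have hRsa : IsSelfAdjoint R := hR_pos.isSelfAdjoint
    rw [ContinuousLinearMap.isSelfAdjoint_iff'] at hRsa ⊢
    calc ContinuousLinearMap.adjoint Rinv
        = ContinuousLinearMap.adjoint Rinv ∘L (R ∘L Rinv) := by rw [hRinv₁]; rfl
      _ = (ContinuousLinearMap.adjoint Rinv ∘L ContinuousLinearMap.adjoint R) ∘L Rinv := by
          rw [hRsa, ContinuousLinearMap.comp_assoc]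
      _ = ContinuousLinearMap.adjoint (R ∘L Rinv) ∘L Rinv := by
          rw [ContinuousLinearMap.adjoint_comp]
      _ = Rinv := by rw [hRinv₁, ContinuousLinearMap.one_def, ContinuousLinearMap.adjoint_id,
          ContinuousLinearMap.id_comp]
  have hWsa' := ContinuousLinearMap.isSelfAdjoint_iff'.1 hWsa
  have hRinvsa' := ContinuousLinearMap.isSelfAdjoint_iff'.1 hRinv_sa
  have hWmove : ∀ x y : H, ⟪x, W y⟫_ℂ = ⟪W x, y⟫_ℂ := fun x y => by
    conv_rhs => rw [← hWsa']
    rw [ContinuousLinearMap.adjoint_inner_left]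
  have hRmove : ∀ x y : H, ⟪x, Rinv y⟫_ℂ = ⟪Rinv x, y⟫_ℂ := fun x y => by
    conv_rhs => rw [← hRinvsa']
    rw [ContinuousLinearMap.adjoint_inner_left]
  have h1 : ⟪k, absW k⟫_ℂ = ⟪Rinv (W k), Rinv (W k)⟫_ℂ := by
    conv_lhs => rw [← hWNW]
    calc ⟪k, (W * ((Rinv * Rinv) * W)) k⟫_ℂ
        = ⟪k, W (Rinv (Rinv (W k)))⟫_ℂ := rfl
      _ = ⟪W k, Rinv (Rinv (W k))⟫_ℂ := hWmove _ _
      _ = ⟪Rinv (W k), Rinv (W k)⟫_ℂ := hRmove _ _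
  rw [h1]
  simpa using inner_self_eq_norm_sq (𝕜 := ℂ) (Rinv (W k))

lemma Rinv_selfAdjoint' {H : Type*} [NormedAddCommGroup H] [InnerProductSpace ℂ H]
    [CompleteSpace H] (R : H →L[ℂ] H) (hR_pos : R.IsPositive)
    (Rinv : H →L[ℂ] H) (hRinv₁ : R ∘L Rinv = 1) : IsSelfAdjoint Rinv := by
  have hRsa : IsSelfAdjoint R := hR_pos.isSelfAdjoint
  rw [ContinuousLinearMap.isSelfAdjoint_iff'] at hRsa ⊢
  calc ContinuousLinearMap.adjoint Rinv
      = ContinuousLinearMap.adjoint Rinv ∘L (R ∘L Rinv) := by rw [hRinv₁]; rfl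
    _ = (ContinuousLinearMap.adjoint Rinv ∘L ContinuousLinearMap.adjoint R) ∘L Rinv := by
        rw [hRsa, ContinuousLinearMap.comp_assoc]
    _ = ContinuousLinearMap.adjoint (R ∘L Rinv) ∘L Rinv := by
        rw [ContinuousLinearMap.adjoint_comp]
    _ = Rinv := by rw [hRinv₁, ContinuousLinearMap.one_def, ContinuousLinearMap.adjoint_id,
        ContinuousLinearMap.id_comp]

/-- Let `W` be a bounded self-adjoint operator on a complex Hilbert
space `H` with `0 ∉ spec(W)` (a regular Gram operator), let `|W|` be its absolute value
(positive square root of `W∘W`), and let `R = |W|^{1/2}` be the positive square root of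
`|W|`, with bounded inverse `R⁻¹ = |W|^{-1/2}`.  A family `{η_x^i}` is a continuous frame
of rank `n` for the Hilbert space `H` with frame bounds `a ≤ b` if and only if
`{|W|^{-1/2} η_x^i}` is a continuous frame for the Krein space `H_W` (with the `W`-metric
`[f,g] = ⟪f, W g⟫` and squared `J`-norm `⟪k, |W| k⟫`) with the same frame bounds. -/
theorem frame_transfer_regular_Gram
    {H : Type*} [NormedAddCommGroup H] [InnerProductSpace ℂ H] [CompleteSpace H]
    (W : H →L[ℂ] H) (hWsa : IsSelfAdjoint W) (hspec : (0 : ℂ) ∉ spectrum ℂ W)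
    (absW : H →L[ℂ] H) (habs_pos : absW.IsPositive) (habs_sq : absW ∘L absW = W ∘L W)
    (R : H →L[ℂ] H) (hR_pos : R.IsPositive) (hR_sq : R ∘L R = absW)
    (Rinv : H →L[ℂ] H) (hRinv₁ : R ∘L Rinv = 1) (hRinv₂ : Rinv ∘L R = 1)
    {M : Type*} [MeasurableSpace M] (μ : Measure M)
    (n : ℕ) (η : Fin n → M → H)
    (hmeas : ∀ (i : Fin n) (k : H), Measurable fun x : M => ⟪η i x, k⟫_ℂ)
    (a b : ℝ) (ha : 0 < a) (hab : a ≤ b) :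
    (∀ k : H,
      a * ‖k‖ ^ 2 ≤ ∑ i : Fin n, ∫ x, ‖⟪η i x, k⟫_ℂ‖ ^ 2 ∂μ ∧
      ∑ i : Fin n, ∫ x, ‖⟪η i x, k⟫_ℂ‖ ^ 2 ∂μ ≤ b * ‖k‖ ^ 2) ↔
    (∀ k : H,
      a * (⟪k, absW k⟫_ℂ).re ≤ ∑ i : Fin n, ∫ x, ‖⟪Rinv (η i x), W k⟫_ℂ‖ ^ 2 ∂μ ∧
      ∑ i : Fin n, ∫ x, ‖⟪Rinv (η i x), W k⟫_ℂ‖ ^ 2 ∂μ ≤ b * (⟪k, absW k⟫_ℂ).re) := by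
  have hkey : ∀ k : H, (⟪k, absW k⟫_ℂ).re = ‖Rinv (W k)‖ ^ 2 :=
    key_norm_eq W hWsa absW habs_pos habs_sq R hR_pos hR_sq Rinv hRinv₁ hRinv₂
  have hRinvsa' := ContinuousLinearMap.isSelfAdjoint_iff'.1
    (Rinv_selfAdjoint' R hR_pos Rinv hRinv₁)
  have hinner : ∀ (z k : H), ⟪Rinv z, W k⟫_ℂ = ⟪z, Rinv (W k)⟫_ℂ := fun z k => by
    conv_lhs => rw [← hRinvsa']
    rw [ContinuousLinearMap.adjoint_inner_left]
  have hsum : ∀ k : H,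
      (∑ i : Fin n, ∫ x, ‖⟪Rinv (η i x), W k⟫_ℂ‖ ^ 2 ∂μ) =
        ∑ i : Fin n, ∫ x, ‖⟪η i x, Rinv (W k)⟫_ℂ‖ ^ 2 ∂μ := fun k => by
    simp only [hinner]
  constructor
  · intro hH k
    obtain ⟨h1, h2⟩ := hH (Rinv (W k))
    rw [hsum, hkey]
    exact ⟨h1, h2⟩
  · intro hK k
    obtain ⟨u, hu⟩ := spectrum.isUnit_of_zero_notMem (R := ℂ) hspec
    set k₀ : H := (↑u⁻¹ : H →L[ℂ] H) (R k) with hk₀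
    have hWk₀ : W k₀ = R k := by
      rw [hk₀, ← ContinuousLinearMap.comp_apply, ← hu]
      show ((↑u * ↑u⁻¹ : H →L[ℂ] H)) (R k) = R k
      rw [u.mul_inv]
      rfl
    have hfix : Rinv (W k₀) = k := by
      rw [hWk₀, ← ContinuousLinearMap.comp_apply, hRinv₂]
      rfl
    obtain ⟨h1, h2⟩ := hK k₀
    rw [hsum, hkey, hfix] at h1 h2
    exact ⟨h1, h2⟩
end

section
/- Let H be a complex Hilbert space and let W : H → H be a bounded self-adjoint injective operator, and let |W| be the absolute value of W (the positive square root of W∘W), so that N(k) := √⟨k, |W| k⟩ defines a norm on H. Then H is complete with respect to the norm N if and only if 0 is not in the spectrum of W. -/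
set_option synthInstance.maxHeartbeats 1000000
set_option maxHeartbeats 1000000


open scoped InnerProductSpace

/-- Let `W` be a bounded self-adjoint injective operator on a complex
Hilbert space `H` and `|W|` its absolute value (the positive square root of `W∘W`), so
that `N k = √⟪k, |W| k⟫` is a norm on `H` (the `J`-norm of the `W`-metric space `H_W`).
Then `H` is (sequentially) complete with respect to `N` if and only if `0 ∉ spec(W)`. -/
theorem complete_J_norm_iff_regular
    {H : Type*} [NormedAddCommGroup H] [InnerProductSpace ℂ H] [CompleteSpace H]
    (W : H →L[ℂ] H) (hWsa : IsSelfAdjoint W) (hWinj : Function.Injective W)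
    (absW : H →L[ℂ] H) (habs_pos : absW.IsPositive) (habs_sq : absW ∘L absW = W ∘L W)
    (N : H → ℝ) (hN : ∀ k : H, N k = Real.sqrt (⟪k, absW k⟫_ℂ).re) :
    ((∀ u : ℕ → H,
        (∀ ε : ℝ, 0 < ε → ∃ n₀ : ℕ, ∀ m ≥ n₀, ∀ n ≥ n₀, N (u m - u n) < ε) →
        ∃ x : H, ∀ ε : ℝ, 0 < ε → ∃ n₀ : ℕ, ∀ n ≥ n₀, N (u n - x) < ε) ↔
      (0 : ℂ) ∉ spectrum ℂ W) := by
  have habs_nonneg : 0 ≤ absW := (ContinuousLinearMap.nonneg_iff_isPositive absW).2 habs_pos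
  set S := CFC.sqrt absW with hSdef
  have hS_nonneg : 0 ≤ S := CFC.sqrt_nonneg absW
  have hS_mul : S * S = absW := CFC.sqrt_mul_sqrt_self absW habs_nonneg
  have hS_app : ∀ x : H, S (S x) = absW x := fun x => by
    rw [← ContinuousLinearMap.mul_apply, hS_mul]
  have hS_pos : S.IsPositive := (ContinuousLinearMap.nonneg_iff_isPositive S).1 hS_nonneg
  have hS_sa : IsSelfAdjoint S := hS_pos.isSelfAdjoint
  have hSadj : ∀ x y : H, ⟪S x, y⟫_ℂ = ⟪x, S y⟫_ℂ := fun x y => by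
    conv_lhs => rw [← (ContinuousLinearMap.isSelfAdjoint_iff'.mp hS_sa)]
    exact ContinuousLinearMap.adjoint_inner_left _ _ _
  have habsadj : ∀ x y : H, ⟪absW x, y⟫_ℂ = ⟪x, absW y⟫_ℂ := fun x y => by
    conv_lhs => rw [← (ContinuousLinearMap.isSelfAdjoint_iff'.mp habs_pos.isSelfAdjoint)]
    exact ContinuousLinearMap.adjoint_inner_left _ _ _
  have hWadj : ∀ x y : H, ⟪W x, y⟫_ℂ = ⟪x, W y⟫_ℂ := fun x y => by
    conv_lhs => rw [← (ContinuousLinearMap.isSelfAdjoint_iff'.mp hWsa)]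
    exact ContinuousLinearMap.adjoint_inner_left _ _ _
  -- N k = ‖S k‖
  have hN' : ∀ k : H, N k = ‖S k‖ := by
    intro k
    rw [hN k, ← hS_app k, ← hSadj]
    have : (⟪S k, S k⟫_ℂ).re = ‖S k‖ ^ 2 := by
      simpa using inner_self_eq_norm_sq (𝕜 := ℂ) (S k)
    rw [this, Real.sqrt_sq (norm_nonneg _)]
  -- injectivity
  have hW2inj : Function.Injective (W ∘L W) := fun x y hxy => by
    exact hWinj (hWinj hxy)
  have habsinj : Function.Injective absW := by
    intro x y hxy
    have : (W ∘L W) x = (W ∘L W) y := by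
      rw [← habs_sq]; simp only [ContinuousLinearMap.comp_apply, hxy]
    exact hW2inj this
  have hSinj : Function.Injective S := by
    intro x y hxy
    have : absW x = absW y := by
      rw [← hS_app, ← hS_app, hxy]
    exact habsinj this
  -- ‖W x‖ = ‖absW x‖
  have hWabs : ∀ x : H, ‖W x‖ = ‖absW x‖ := by
    intro x
    have h1 : (⟪W x, W x⟫_ℂ).re = (⟪absW x, absW x⟫_ℂ).re := by
      rw [hWadj, habsadj]
      have : W (W x) = absW (absW x) := by
        have := congrArg (fun T : H →L[ℂ] H => T x) habs_sq
        simpa using this.symm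
      rw [this]
    have e1 : (⟪W x, W x⟫_ℂ).re = ‖W x‖ ^ 2 := by
      simpa using inner_self_eq_norm_sq (𝕜 := ℂ) (W x)
    have e2 : (⟪absW x, absW x⟫_ℂ).re = ‖absW x‖ ^ 2 := by
      simpa using inner_self_eq_norm_sq (𝕜 := ℂ) (absW x)
    have h2 : ‖W x‖ ^ 2 = ‖absW x‖ ^ 2 := by rw [← e1, ← e2, h1]
    have := congrArg Real.sqrt h2
    rwa [Real.sqrt_sq (norm_nonneg _), Real.sqrt_sq (norm_nonneg _)] at this
  constructor
  · -- completeness → 0 ∉ spectrum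
    intro h
    -- range S is closed
    have hclosed : IsClosed (Set.range S) := by
      apply IsSeqClosed.isClosed
      intro y l hy hyl
      choose u hu using hy
      have hcauchy : CauchySeq y := hyl.cauchySeq
      rw [Metric.cauchySeq_iff] at hcauchy
      obtain ⟨x, hx⟩ := h u (by
        intro ε hε
        obtain ⟨n₀, hn₀⟩ := hcauchy ε hε
        exact ⟨n₀, fun m hm n hn => by
          rw [hN', map_sub, hu, hu, ← dist_eq_norm]
          exact hn₀ m hm n hn⟩)
      have : Filter.Tendsto y Filter.atTop (nhds (S x)) := by
        rw [Metric.tendsto_atTop]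
        intro ε hε
        obtain ⟨n₀, hn₀⟩ := hx ε hε
        exact ⟨n₀, fun n hn => by
          rw [dist_eq_norm, ← hu, ← map_sub, ← hN']
          exact hn₀ n hn⟩
      rw [tendsto_nhds_unique hyl this]
      exact ⟨x, rfl⟩
    -- S bounded below
    have hSbdd : ∃ C : ℝ, 0 ≤ C ∧ ∀ x : H, ‖x‖ ≤ C * ‖S x‖ := by
      let e := S.equivRange hSinj hclosed
      refine ⟨‖(e.symm : LinearMap.range (S : H →ₗ[ℂ] H) →L[ℂ] H)‖, ContinuousLinearMap.opNorm_nonneg _, fun x => ?_⟩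
      have h1 : e.symm (e x) = x := e.symm_apply_apply x
      have h2 : ‖e x‖ = ‖S x‖ := by
        have : ((e x : LinearMap.range (S : H →ₗ[ℂ] H)) : H) = S x := rfl
        rw [← this]; rfl
      calc ‖x‖ = ‖e.symm (e x)‖ := by rw [h1]
        _ ≤ ‖(e.symm : LinearMap.range (S : H →ₗ[ℂ] H) →L[ℂ] H)‖ * ‖e x‖ := by
            simpa using (e.symm : LinearMap.range (S : H →ₗ[ℂ] H) →L[ℂ] H).le_opNorm (e x)
        _ = ‖(e.symm : LinearMap.range (S : H →ₗ[ℂ] H) →L[ℂ] H)‖ * ‖S x‖ := by rw [h2]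
    obtain ⟨C, hC0, hCb⟩ := hSbdd
    -- W bounded below
    have hWbdd : ∀ x : H, ‖x‖ ≤ (C * C) * ‖W x‖ := by
      intro x
      rw [hWabs, ← hS_app]
      calc ‖x‖ ≤ C * ‖S x‖ := hCb x
        _ ≤ C * (C * ‖S (S x)‖) := by
            have := hCb (S x)
            nlinarith
        _ = (C * C) * ‖S (S x)‖ := by ring
    -- W surjective
    have hWanti : AntilipschitzWith ⟨C * C, by positivity⟩ W :=
      AddMonoidHomClass.antilipschitz_of_bound W (fun x => hWbdd x)
    have hRclosed : IsClosed (Set.range W) := hWanti.isClosed_range W.uniformContinuous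
    have hKWclosed : IsClosed ((LinearMap.range (W : H →ₗ[ℂ] H) : Submodule ℂ H) : Set H) := by
      have : ((LinearMap.range (W : H →ₗ[ℂ] H) : Submodule ℂ H) : Set H) = Set.range W := by
        ext z; simp [LinearMap.mem_range, Set.mem_range]
      rw [this]; exact hRclosed
    haveI : CompleteSpace (LinearMap.range (W : H →ₗ[ℂ] H) : Submodule ℂ H) := hKWclosed.completeSpace_coe
    have horth : (LinearMap.range (W : H →ₗ[ℂ] H) : Submodule ℂ H)ᗮ = ⊥ := by
      rw [Submodule.eq_bot_iff]
      intro v hv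
      have hWv : ∀ x : H, ⟪x, W v⟫_ℂ = 0 := fun x => by
        rw [← hWadj]
        exact ((Submodule.mem_orthogonal _ v).mp hv (W x) (LinearMap.mem_range_self _ x))
      have hWv0 : W v = 0 := inner_self_eq_zero.mp (hWv (W v))
      exact hWinj (by rw [hWv0, map_zero])
    have hrange : LinearMap.range (W : H →ₗ[ℂ] H) = (⊤ : Submodule ℂ H) :=
      Submodule.orthogonal_eq_bot_iff.mp horth
    -- W is a unit
    have hker : LinearMap.ker (W : H →ₗ[ℂ] H) = (⊥ : Submodule ℂ H) := LinearMap.ker_eq_bot.mpr hWinj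
    have hUnit : IsUnit W := by
      let e' := ContinuousLinearEquiv.ofBijective W hker hrange
      have h1 : W * (e'.symm : H →L[ℂ] H) = 1 := by
        ext x
        have : W (e'.symm x) = e' (e'.symm x) := by
          rw [ContinuousLinearEquiv.coeFn_ofBijective]
        simp only [ContinuousLinearMap.mul_apply, ContinuousLinearEquiv.coe_coe,
          ContinuousLinearMap.one_apply]
        rw [this, e'.apply_symm_apply]
      have h2 : (e'.symm : H →L[ℂ] H) * W = 1 := by
        ext x
        have : W x = e' x := by rw [ContinuousLinearEquiv.coeFn_ofBijective]
        simp only [ContinuousLinearMap.mul_apply, ContinuousLinearEquiv.coe_coe,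
          ContinuousLinearMap.one_apply]
        rw [this, e'.symm_apply_apply]
      exact ⟨⟨W, (e'.symm : H →L[ℂ] H), h1, h2⟩, rfl⟩
    exact spectrum.zero_notMem ℂ hUnit
  · -- 0 ∉ spectrum → completeness
    intro h u hu
    have hUnit : IsUnit W := spectrum.isUnit_of_zero_notMem ℂ h
    obtain ⟨v, hv⟩ := hUnit
    set V : H →L[ℂ] H := ↑v⁻¹ with hVdef
    have hVW : ∀ x : H, V (W x) = x := by
      intro x
      have : V * W = 1 := by rw [hVdef, ← hv]; exact v.inv_mul
      calc V (W x) = (V * W) x := rfl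
        _ = x := by rw [this]; rfl
    have hbdd : ∀ x : H, ‖x‖ ≤ (‖V‖ * ‖S‖) * N x := by
      intro x
      rw [hN' x]
      calc ‖x‖ = ‖V (W x)‖ := by rw [hVW]
        _ ≤ ‖V‖ * ‖W x‖ := V.le_opNorm _
        _ = ‖V‖ * ‖S (S x)‖ := by rw [hWabs, hS_app]
        _ ≤ ‖V‖ * (‖S‖ * ‖S x‖) := by
            have := S.le_opNorm (S x)
            nlinarith [norm_nonneg V]
        _ = (‖V‖ * ‖S‖) * ‖S x‖ := by ring
    set D := ‖V‖ * ‖S‖ with hDdef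
    have hD0 : 0 ≤ D := mul_nonneg (norm_nonneg _) (norm_nonneg _)
    have hcauchy : CauchySeq u := by
      rw [Metric.cauchySeq_iff]
      intro ε hε
      obtain ⟨n₀, hn₀⟩ := hu (ε / (D + 1)) (by positivity)
      refine ⟨n₀, fun m hm n hn => ?_⟩
      rw [dist_eq_norm]
      calc ‖u m - u n‖ ≤ D * N (u m - u n) := hbdd _
        _ ≤ D * (ε / (D + 1)) := by
            have := (hn₀ m hm n hn).le
            have hNn : 0 ≤ N (u m - u n) := by rw [hN']; exact norm_nonneg _
            nlinarith
        _ < ε := by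
            rw [div_eq_inv_mul]
            have : D * ((D+1)⁻¹ * ε) = (D / (D+1)) * ε := by field_simp
            rw [this]
            have hlt : D / (D + 1) < 1 := by
              rw [div_lt_one (by linarith)]; linarith
            nlinarith [div_nonneg hD0 (by linarith : (0:ℝ) ≤ D + 1)]
    obtain ⟨x, hx⟩ := cauchySeq_tendsto_of_complete hcauchy
    refine ⟨x, fun ε hε => ?_⟩
    rw [Metric.tendsto_atTop] at hx
    obtain ⟨n₀, hn₀⟩ := hx (ε / (‖S‖ + 1)) (by positivity)
    refine ⟨n₀, fun n hn => ?_⟩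
    have hd := hn₀ n hn
    rw [dist_eq_norm] at hd
    rw [hN', map_sub]
    calc ‖S (u n) - S x‖ = ‖S (u n - x)‖ := by rw [map_sub]
      _ ≤ ‖S‖ * ‖u n - x‖ := S.le_opNorm _
      _ < ε := by
          have hS0 : (0:ℝ) ≤ ‖S‖ := norm_nonneg _
          have h1 : ‖S‖ * ‖u n - x‖ ≤ ‖S‖ * (ε / (‖S‖ + 1)) := by nlinarith [norm_nonneg (u n - x)]
          have h2 : ‖S‖ * (ε / (‖S‖ + 1)) < ε := by
            rw [mul_div_assoc'] at *
            rw [div_lt_iff₀ (by linarith)]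
            nlinarith
          linarith
end
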